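/- arXiv:2005.08204 — 7 statements merged into one kernel-verified Lean document; each statement's English description precedes it below -/
import Mathlib

section
/- Let X ~ Beta(a, b) and Y ~ Beta(a', b') with a, b, a', b' > 0. Then Y is stochastically dominated by X (i.e., the CDF of X is pointwise at most the CDF of Y on [0,1]) if and only if a ≥ a' and b ≤ b'. -/
open MeasureTheory Set intervalIntegral


noncomputable def phi (a b : ℝ) : ℝ → ℝ := fun y => y ^ (a - 1) * (1 - y) ^ (b - 1)

lemma phi_meas (a b : ℝ) : Measurable (phi a b) := by unfold phi; fun_prop

lemma phi_nonneg {a b : ℝ} {y : ℝ} (hy : 0 ≤ y) (hy1 : y ≤ 1) : 0 ≤ phi a b y :=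
  mul_nonneg (Real.rpow_nonneg hy _) (Real.rpow_nonneg (by linarith) _)

lemma phi_pos {a b : ℝ} {y : ℝ} (hy : 0 < y) (hy1 : y < 1) : 0 < phi a b y :=
  mul_pos (Real.rpow_pos_of_pos hy _) (Real.rpow_pos_of_pos (by linarith) _)

lemma phi_integrableOn {a b : ℝ} (ha : 0 < a) (hb : 0 < b) :
    IntegrableOn (phi a b) (Ioo 0 1) := by
  have h1 : IntegrableOn (phi a b) (Ioc 0 (1/2 : ℝ)) := by
    have hI : IntervalIntegrable (fun y : ℝ => max 1 ((1/2 : ℝ) ^ (b-1)) * y ^ (a-1))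
        volume 0 (1/2) :=
      (intervalIntegrable_rpow' (a := (0:ℝ)) (b := 1/2) (r := a - 1) (by linarith)).const_mul _
    rw [intervalIntegrable_iff, uIoc_of_le (by norm_num)] at hI
    refine Integrable.mono' hI ((phi_meas a b).aestronglyMeasurable.restrict) ?_
    filter_upwards [ae_restrict_mem measurableSet_Ioc] with y hy
    obtain ⟨hy0, hy2⟩ := hy
    have h1y : (1:ℝ)/2 ≤ 1 - y := by linarith
    have hub : (1 - y) ^ (b-1) ≤ max 1 ((1/2 : ℝ) ^ (b-1)) := by
      rcases le_or_gt 0 (b - 1) with h | h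
      · exact le_max_of_le_left (Real.rpow_le_one (by linarith) (by linarith) h)
      · exact le_max_of_le_right (Real.rpow_le_rpow_of_nonpos (by norm_num) h1y h.le)
    rw [Real.norm_eq_abs, abs_of_nonneg (phi_nonneg hy0.le (by linarith)), mul_comm]
    exact mul_le_mul_of_nonneg_left hub (Real.rpow_nonneg hy0.le _)
  have h2 : IntegrableOn (phi a b) (Ioo (1/2 : ℝ) 1) := by
    have hI : IntervalIntegrable (fun y : ℝ => max 1 ((1/2 : ℝ) ^ (a-1)) * (1 - y) ^ (b-1))
        volume (1/2) 1 := by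
      have := ((intervalIntegrable_rpow' (a := (0:ℝ)) (b := 1/2) (r := b - 1)
        (by linarith)).comp_sub_left 1).const_mul (max 1 ((1/2 : ℝ) ^ (a-1)))
      norm_num at this
      exact this.symm
    rw [intervalIntegrable_iff, uIoc_of_le (by norm_num)] at hI
    have h3 : IntegrableOn (phi a b) (Ioc (1/2 : ℝ) 1) := by
      refine Integrable.mono' hI ((phi_meas a b).aestronglyMeasurable.restrict) ?_
      filter_upwards [ae_restrict_mem measurableSet_Ioc] with y hy
      obtain ⟨hy0, hy2⟩ := hy
      have hub : y ^ (a-1) ≤ max 1 ((1/2 : ℝ) ^ (a-1)) := by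
        rcases le_or_gt 0 (a - 1) with h | h
        · exact le_max_of_le_left (Real.rpow_le_one (by linarith) (by linarith) h)
        · exact le_max_of_le_right (Real.rpow_le_rpow_of_nonpos (by norm_num) (by linarith) h.le)
      rw [Real.norm_eq_abs, abs_of_nonneg (phi_nonneg (by linarith) hy2)]
      exact mul_le_mul_of_nonneg_right hub (Real.rpow_nonneg (by linarith) _)
    exact h3.mono_set Ioo_subset_Ioc_self
  exact (h1.union h2).mono_set (fun y hy => by
    rcases le_or_gt y (1/2) with h | h
    · exact Or.inl ⟨hy.1, h⟩
    · exact Or.inr ⟨h, hy.2⟩)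

/-- Unnormalised incomplete Beta integral: `∫_0^{min x 1} y^{a-1} (1-y)^{b-1} dy`. -/
noncomputable def betaInt (a b x : ℝ) : ℝ :=
  ∫ y in Set.Ioo (0 : ℝ) (min x 1), y ^ (a - 1) * (1 - y) ^ (b - 1)

/-- The CDF of the Beta(a, b) distribution. -/
noncomputable def betaCDF (a b x : ℝ) : ℝ :=
  betaInt a b x / betaInt a b 1

lemma phi_integrableOn' {a b : ℝ} (ha : 0 < a) (hb : 0 < b) {s : Set ℝ}
    (hs : s ⊆ Ioc 0 1) : IntegrableOn (phi a b) s :=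
  ((phi_integrableOn ha hb).congr_set_ae Ioo_ae_eq_Ioc.symm).mono_set hs

lemma betaInt_eq {a b x : ℝ} (hx1 : x ≤ 1) :
    betaInt a b x = ∫ y in Ioo 0 x, phi a b y := by
  rw [betaInt, min_eq_left hx1]; rfl

lemma betaInt_zero (a b : ℝ) : betaInt a b 0 = 0 := by
  rw [betaInt_eq zero_le_one]; simp

lemma betaInt_pos {a b x : ℝ} (ha : 0 < a) (hb : 0 < b) (hx0 : 0 < x) (hx1 : x ≤ 1) :
    0 < betaInt a b x := by
  rw [betaInt_eq hx1]
  have hint : IntegrableOn (phi a b) (Ioo 0 x) :=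
    phi_integrableOn' ha hb (fun y hy => ⟨hy.1, le_trans hy.2.le hx1⟩)
  have hnn : 0 ≤ᵐ[volume.restrict (Ioo 0 x)] phi a b := by
    filter_upwards [ae_restrict_mem measurableSet_Ioo] with y hy
    exact phi_nonneg hy.1.le (by linarith [hy.2])
  rw [setIntegral_pos_iff_support_of_nonneg_ae hnn hint]
  have hsub : Ioo 0 x ⊆ Function.support (phi a b) ∩ Ioo 0 x := fun y hy =>
    ⟨(phi_pos hy.1 (lt_of_lt_of_le hy.2 hx1)).ne', hy⟩
  calc (0:ENNReal) < volume (Ioo 0 x) := by simp [hx0]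
    _ ≤ _ := measure_mono hsub

lemma phi_intervalIntegrable {a b u v : ℝ} (ha : 0 < a) (hb : 0 < b)
    (hu : 0 ≤ u) (huv : u ≤ v) (hv : v ≤ 1) :
    IntervalIntegrable (phi a b) volume u v := by
  rw [intervalIntegrable_iff, uIoc_of_le huv]
  exact phi_integrableOn' ha hb (fun y hy => ⟨lt_of_le_of_lt hu hy.1, hy.2.trans hv⟩)

lemma betaInt_eq_intervalIntegral {a b x : ℝ} (hx0 : 0 ≤ x) (hx1 : x ≤ 1) :
    betaInt a b x = ∫ y in (0:ℝ)..x, phi a b y := by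
  rw [betaInt_eq hx1, intervalIntegral.integral_of_le hx0, integral_Ioc_eq_integral_Ioo]

lemma betaInt_split {a b x : ℝ} (ha : 0 < a) (hb : 0 < b) (hx0 : 0 ≤ x) (hx1 : x ≤ 1) :
    betaInt a b 1 = betaInt a b x + ∫ y in Ioo x 1, phi a b y := by
  rw [betaInt_eq_intervalIntegral zero_le_one le_rfl, betaInt_eq_intervalIntegral hx0 hx1,
    ← intervalIntegral.integral_add_adjacent_intervals (b := x)
      (phi_intervalIntegrable ha hb le_rfl hx0 hx1)
      (phi_intervalIntegrable ha hb hx0 hx1 le_rfl),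
    intervalIntegral.integral_of_le hx1, integral_Ioc_eq_integral_Ioo]

lemma betaInt_symm {a b x : ℝ} (ha : 0 < a) (hb : 0 < b) (hx0 : 0 ≤ x) (hx1 : x ≤ 1) :
    betaInt a b 1 = betaInt a b x + betaInt b a (1 - x) := by
  rw [betaInt_split ha hb hx0 hx1]
  congr 1
  have h1 : betaInt b a (1-x) = ∫ y in (0:ℝ)..(1-x), phi a b (1 - y) := by
    rw [betaInt_eq_intervalIntegral (by linarith) (by linarith)]
    exact intervalIntegral.integral_congr (fun y _ => by simp [phi, sub_sub_cancel, mul_comm])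
  rw [h1, intervalIntegral.integral_comp_sub_left (phi a b) 1]
  norm_num
  rw [intervalIntegral.integral_of_le hx1, integral_Ioc_eq_integral_Ioo]

lemma frac_mono {A B A' B' c : ℝ} (hA' : 0 ≤ A') (hB' : 0 ≤ B')
    (h1 : A ≤ c * A') (h2 : c * B' ≤ B) (hd : 0 < A + B) (hd' : 0 < A' + B') :
    A / (A + B) ≤ A' / (A' + B') := by
  rw [div_le_div_iff₀ hd hd']
  nlinarith [mul_le_mul_of_nonneg_right h1 hB', mul_le_mul_of_nonneg_left h2 hA']

lemma cdf_step {p q p' q' c x : ℝ} (hp : 0 < p) (hq : 0 < q) (hp' : 0 < p') (hq' : 0 < q')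
    (hx0 : 0 < x) (hx1 : x < 1)
    (hhead : ∀ y ∈ Ioo (0:ℝ) x, phi p q y ≤ c * phi p' q' y)
    (htail : ∀ y ∈ Ioo x (1:ℝ), c * phi p' q' y ≤ phi p q y) :
    betaCDF p q x ≤ betaCDF p' q' x := by
  have hs1 : MeasurableSet (Ioo (0:ℝ) x) := measurableSet_Ioo
  have hs2 : MeasurableSet (Ioo x (1:ℝ)) := measurableSet_Ioo
  have hi1 : ∀ {u v : ℝ}, 0 < u → 0 < v → IntegrableOn (phi u v) (Ioo 0 x) :=
    fun hu hv => phi_integrableOn' hu hv (fun y hy => ⟨hy.1, (le_of_lt hy.2).trans hx1.le⟩)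
  have hi2 : ∀ {u v : ℝ}, 0 < u → 0 < v → IntegrableOn (phi u v) (Ioo x 1) :=
    fun hu hv => phi_integrableOn' hu hv (fun y hy => ⟨hx0.trans hy.1, hy.2.le⟩)
  have hA : (∫ y in Ioo (0:ℝ) x, phi p q y) ≤ c * ∫ y in Ioo (0:ℝ) x, phi p' q' y := by
    rw [← MeasureTheory.integral_const_mul]
    exact setIntegral_mono_on (hi1 hp hq) ((hi1 hp' hq').const_mul c) hs1 hhead
  have hB : c * (∫ y in Ioo x (1:ℝ), phi p' q' y) ≤ ∫ y in Ioo x (1:ℝ), phi p q y := by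
    rw [← MeasureTheory.integral_const_mul]
    exact setIntegral_mono_on ((hi2 hp' hq').const_mul c) (hi2 hp hq) hs2 htail
  have hA'nn : 0 ≤ ∫ y in Ioo (0:ℝ) x, phi p' q' y :=
    setIntegral_nonneg hs1 (fun y hy => phi_nonneg hy.1.le (hy.2.le.trans hx1.le))
  have hB'nn : 0 ≤ ∫ y in Ioo x (1:ℝ), phi p' q' y :=
    setIntegral_nonneg hs2 (fun y hy => phi_nonneg (hx0.trans hy.1).le hy.2.le)
  have e1 := betaInt_split hp hq hx0.le hx1.le
  have e2 := betaInt_split hp' hq' hx0.le hx1.le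
  have d1 : 0 < betaInt p q 1 := betaInt_pos hp hq one_pos le_rfl
  have d2 : 0 < betaInt p' q' 1 := betaInt_pos hp' hq' one_pos le_rfl
  have hd : 0 < (∫ y in Ioo (0:ℝ) x, phi p q y) + ∫ y in Ioo x (1:ℝ), phi p q y := by
    rw [← betaInt_eq hx1.le, ← e1]; exact d1
  have hd' : 0 < (∫ y in Ioo (0:ℝ) x, phi p' q' y) + ∫ y in Ioo x (1:ℝ), phi p' q' y := by
    rw [← betaInt_eq hx1.le, ← e2]; exact d2
  rw [betaCDF, betaCDF, e1, e2, betaInt_eq hx1.le, betaInt_eq hx1.le]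
  exact frac_mono hA'nn hB'nn hA hB hd hd'

lemma step_a {a b a' x : ℝ} (ha : 0 < a) (hb : 0 < b) (ha' : 0 < a') (haa : a' ≤ a)
    (hx0 : 0 < x) (hx1 : x < 1) : betaCDF a b x ≤ betaCDF a' b x := by
  refine cdf_step (c := x ^ (a - a')) ha hb ha' hb hx0 hx1 (fun y hy => ?_) (fun y hy => ?_)
  · have hy0 := hy.1
    have : phi a b y = y ^ (a - a') * phi a' b y := by
      rw [phi, phi, ← mul_assoc, ← Real.rpow_add hy0]
      ring_nf
    rw [this]
    exact mul_le_mul_of_nonneg_right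
      (Real.rpow_le_rpow hy0.le hy.2.le (by linarith))
      (phi_nonneg hy0.le (by nlinarith [hy.2, hx1]))
  · have hy1 := hy.2
    have : phi a b y = y ^ (a - a') * phi a' b y := by
      rw [phi, phi, ← mul_assoc, ← Real.rpow_add (hx0.trans hy.1)]
      ring_nf
    rw [this]
    exact mul_le_mul_of_nonneg_right
      (Real.rpow_le_rpow hx0.le hy.1.le (by linarith))
      (phi_nonneg (hx0.trans hy.1).le hy1.le)

lemma step_b {a' b b' x : ℝ} (ha' : 0 < a') (hb : 0 < b) (hb' : 0 < b') (hbb : b ≤ b')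
    (hx0 : 0 < x) (hx1 : x < 1) : betaCDF a' b x ≤ betaCDF a' b' x := by
  refine cdf_step (c := (1 - x) ^ (b - b')) ha' hb ha' hb' hx0 hx1 (fun y hy => ?_) (fun y hy => ?_)
  · have hy1 : y < 1 := hy.2.trans hx1
    have : phi a' b y = (1 - y) ^ (b - b') * phi a' b' y := by
      rw [phi, phi, mul_comm ((1-y) ^ (b-b')), mul_assoc, ← Real.rpow_add (by linarith)]
      ring_nf
    rw [this]
    exact mul_le_mul_of_nonneg_right
      (Real.rpow_le_rpow_of_nonpos (by linarith) (by linarith [hy.2]) (by linarith))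
      (phi_nonneg hy.1.le hy1.le)
  · have : phi a' b y = (1 - y) ^ (b - b') * phi a' b' y := by
      rw [phi, phi, mul_comm ((1-y) ^ (b-b')), mul_assoc, ← Real.rpow_add (by linarith [hy.2])]
      ring_nf
    rw [this]
    exact mul_le_mul_of_nonneg_right
      (Real.rpow_le_rpow_of_nonpos (by linarith [hy.2]) (by linarith [hy.1]) (by linarith))
      (phi_nonneg (hx0.trans hy.1).le hy.2.le)

lemma betaCDF_zero (a b : ℝ) : betaCDF a b 0 = 0 := by
  rw [betaCDF, betaInt_zero, zero_div]

lemma betaCDF_one {a b : ℝ} (ha : 0 < a) (hb : 0 < b) : betaCDF a b 1 = 1 :=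
  div_self (betaInt_pos ha hb one_pos le_rfl).ne'

lemma betaInt_one_symm {a b : ℝ} (ha : 0 < a) (hb : 0 < b) :
    betaInt a b 1 = betaInt b a 1 := by
  have h := betaInt_symm ha hb (le_refl 0) zero_le_one
  rw [betaInt_zero, zero_add, sub_zero] at h
  exact h

lemma betaCDF_symm {a b x : ℝ} (ha : 0 < a) (hb : 0 < b) (hx0 : 0 ≤ x) (hx1 : x ≤ 1) :
    betaCDF b a (1 - x) = 1 - betaCDF a b x := by
  have hs := betaInt_symm ha hb hx0 hx1
  have hB : (0:ℝ) < betaInt a b 1 := betaInt_pos ha hb one_pos le_rfl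
  rw [betaCDF, betaCDF, ← betaInt_one_symm ha hb]
  field_simp
  linarith

lemma rpow_base_integral {a x : ℝ} (ha : 0 < a) (hx0 : 0 < x) :
    (∫ y in Ioo (0:ℝ) x, y ^ (a - 1)) = x ^ a / a := by
  rw [← integral_Ioc_eq_integral_Ioo, ← intervalIntegral.integral_of_le hx0.le,
    integral_rpow (Or.inl (by linarith))]
  have h1 : a - 1 + 1 = a := by ring
  rw [h1, Real.zero_rpow ha.ne']
  ring

lemma rpow_base_integrable {a x : ℝ} (ha : 0 < a) (hx0 : 0 < x) :
    IntegrableOn (fun y : ℝ => y ^ (a - 1)) (Ioo 0 x) := by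
  have := (intervalIntegrable_rpow' (a := (0:ℝ)) (b := x) (r := a - 1) (by linarith))
  rw [intervalIntegrable_iff, uIoc_of_le hx0.le] at this
  exact this.mono_set Ioo_subset_Ioc_self

lemma betaInt_head_lb {a b x : ℝ} (ha : 0 < a) (hb : 0 < b) (hx0 : 0 < x) (hx2 : x ≤ 1/2) :
    min 1 ((1/2:ℝ) ^ (b - 1)) * (x ^ a / a) ≤ betaInt a b x := by
  rw [betaInt_eq (by linarith), ← rpow_base_integral ha hx0, ← MeasureTheory.integral_const_mul]
  refine setIntegral_mono_on ((rpow_base_integrable ha hx0).const_mul _)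
    (phi_integrableOn' ha hb (fun y hy => ⟨hy.1, by linarith [hy.2]⟩)) measurableSet_Ioo
    (fun y hy => ?_)
  have h1y : (1:ℝ)/2 ≤ 1 - y := by linarith [hy.2]
  have hlb : min 1 ((1/2:ℝ) ^ (b - 1)) ≤ (1 - y) ^ (b - 1) := by
    rcases le_or_gt 0 (b - 1) with h | h
    · exact le_trans (min_le_right _ _) (Real.rpow_le_rpow (by norm_num) h1y h)
    · refine le_trans (min_le_left _ _) ?_
      have := Real.rpow_le_rpow_of_nonpos (by linarith) (by linarith [hy.1] : 1 - y ≤ 1) h.le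
      simpa using this
  rw [phi]
  calc min 1 ((1/2:ℝ) ^ (b - 1)) * y ^ (a-1) = y ^ (a-1) * min 1 ((1/2:ℝ) ^ (b - 1)) :=
        mul_comm _ _
    _ ≤ y ^ (a-1) * (1 - y) ^ (b-1) := mul_le_mul_of_nonneg_left hlb (Real.rpow_nonneg hy.1.le _)

lemma betaInt_head_ub {a b x : ℝ} (ha : 0 < a) (hb : 0 < b) (hx0 : 0 < x) (hx2 : x ≤ 1/2) :
    betaInt a b x ≤ max 1 ((1/2:ℝ) ^ (b - 1)) * (x ^ a / a) := by
  rw [betaInt_eq (by linarith), ← rpow_base_integral ha hx0, ← MeasureTheory.integral_const_mul]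
  refine setIntegral_mono_on
    (phi_integrableOn' ha hb (fun y hy => ⟨hy.1, by linarith [hy.2]⟩))
    ((rpow_base_integrable ha hx0).const_mul _) measurableSet_Ioo (fun y hy => ?_)
  have h1y : (1:ℝ)/2 ≤ 1 - y := by linarith [hy.2]
  have hub : (1 - y) ^ (b - 1) ≤ max 1 ((1/2:ℝ) ^ (b - 1)) := by
    rcases le_or_gt 0 (b - 1) with h | h
    · exact le_max_of_le_left (Real.rpow_le_one (by linarith) (by linarith [hy.1]) h)
    · exact le_max_of_le_right (Real.rpow_le_rpow_of_nonpos (by norm_num) h1y h.le)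
  rw [phi]
  calc y ^ (a-1) * (1 - y) ^ (b-1) ≤ y ^ (a-1) * max 1 ((1/2:ℝ) ^ (b - 1)) :=
        mul_le_mul_of_nonneg_left hub (Real.rpow_nonneg hy.1.le _)
    _ = max 1 ((1/2:ℝ) ^ (b - 1)) * y ^ (a-1) := mul_comm _ _

lemma dom_a {a b a' b' : ℝ} (ha : 0 < a) (hb : 0 < b) (ha' : 0 < a') (hb' : 0 < b')
    (H : ∀ x ∈ Icc (0:ℝ) 1, betaCDF a b x ≤ betaCDF a' b' x) : a' ≤ a := by
  by_contra hlt
  push_neg at hlt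
  set m : ℝ := min 1 ((1/2:ℝ) ^ (b - 1)) with hm_def
  set M : ℝ := max 1 ((1/2:ℝ) ^ (b' - 1)) with hM_def
  have hm : 0 < m := lt_min one_pos (Real.rpow_pos_of_pos (by norm_num) _)
  have hM : 0 < M := lt_of_lt_of_le one_pos (le_max_left _ _)
  have hB : (0:ℝ) < betaInt a b 1 := betaInt_pos ha hb one_pos le_rfl
  have hB' : (0:ℝ) < betaInt a' b' 1 := betaInt_pos ha' hb' one_pos le_rfl
  set K : ℝ := m / a / betaInt a b 1 with hK_def
  set K' : ℝ := M / a' / betaInt a' b' 1 with hK'_def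
  have hK : 0 < K := by positivity
  have hK' : 0 < K' := by positivity
  set ε : ℝ := a' - a with hε_def
  have hε : 0 < ε := by simp [hε_def]; linarith
  set r : ℝ := min (K / K') 1 with hr_def
  have hr : 0 < r := lt_min (by positivity) one_pos
  set x : ℝ := min (1/2) ((r/2) ^ (1/ε)) with hx_def
  have hx0 : 0 < x := lt_min (by norm_num) (Real.rpow_pos_of_pos (by positivity) _)
  have hx2 : x ≤ 1/2 := min_le_left _ _
  have hxe : x ^ ε ≤ r / 2 := by
    have h1 : x ^ ε ≤ ((r/2) ^ (1/ε)) ^ ε :=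
      Real.rpow_le_rpow hx0.le (min_le_right _ _) hε.le
    have h2 : ((r/2) ^ (1/ε)) ^ ε = r / 2 := by
      rw [← Real.rpow_mul (by positivity), one_div, inv_mul_cancel₀ hε.ne', Real.rpow_one]
    linarith [h1, h2.le]
  have hlow : K * x ^ a ≤ betaCDF a b x := by
    have h := betaInt_head_lb ha hb hx0 hx2
    rw [betaCDF, le_div_iff₀ hB]
    calc K * x ^ a * betaInt a b 1 = m * (x ^ a / a) := by
          rw [hK_def]; field_simp
      _ ≤ betaInt a b x := h
  have hup : betaCDF a' b' x ≤ K' * x ^ a' := by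
    have h := betaInt_head_ub ha' hb' hx0 hx2
    rw [betaCDF, div_le_iff₀ hB']
    calc betaInt a' b' x ≤ M * (x ^ a' / a') := h
      _ = K' * x ^ a' * betaInt a' b' 1 := by rw [hK'_def]; field_simp
  have hxa : (0:ℝ) < x ^ a := Real.rpow_pos_of_pos hx0 _
  have hsplit : x ^ a' = x ^ ε * x ^ a := by
    rw [← Real.rpow_add hx0]; congr 1; rw [hε_def]; ring
  have hKr : K' * (r / 2) < K := by
    have h1 : r / 2 < K / K' := by
      have h' : r ≤ K / K' := min_le_left _ _
      linarith
    calc K' * (r / 2) < K' * (K / K') := by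
          exact mul_lt_mul_of_pos_left h1 hK'
      _ = K := by field_simp
  have hkey : K' * x ^ a' < K * x ^ a := by
    rw [hsplit]
    calc K' * (x ^ ε * x ^ a) = (K' * x ^ ε) * x ^ a := by ring
      _ ≤ (K' * (r/2)) * x ^ a := by
          exact mul_le_mul_of_nonneg_right (mul_le_mul_of_nonneg_left hxe hK'.le) hxa.le
      _ < K * x ^ a := mul_lt_mul_of_pos_right hKr hxa
  have := H x ⟨hx0.le, by linarith⟩
  linarith

/-- Theorem 1: `Beta(a',b') ≤_st Beta(a,b)` iff `a ≥ a'` and `b ≤ b'`. -/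
theorem beta_stochastic_dominance_iff (a b a' b' : ℝ)
    (ha : 0 < a) (hb : 0 < b) (ha' : 0 < a') (hb' : 0 < b') :
    (∀ x ∈ Set.Icc (0 : ℝ) 1, betaCDF a b x ≤ betaCDF a' b' x) ↔ (a' ≤ a ∧ b ≤ b') := by
  constructor
  · intro H
    refine ⟨dom_a ha hb ha' hb' H, ?_⟩
    have H' : ∀ z ∈ Icc (0:ℝ) 1, betaCDF b' a' z ≤ betaCDF b a z := by
      intro z hz
      have h1 := H (1 - z) ⟨by linarith [hz.2], by linarith [hz.1]⟩
      have h2 := betaCDF_symm ha hb (by linarith [hz.2] : (0:ℝ) ≤ 1 - z) (by linarith [hz.1])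
      have h3 := betaCDF_symm ha' hb' (by linarith [hz.2] : (0:ℝ) ≤ 1 - z) (by linarith [hz.1])
      rw [show (1 : ℝ) - (1 - z) = z by ring] at h2 h3
      linarith
    exact dom_a hb' ha' hb ha H'
  · rintro ⟨haa, hbb⟩ x hx
    rcases eq_or_lt_of_le hx.1 with h0 | h0
    · rw [← h0, betaCDF_zero, betaCDF_zero]
    rcases eq_or_lt_of_le hx.2 with h1 | h1
    · rw [h1, betaCDF_one ha hb, betaCDF_one ha' hb']
    exact (step_a ha hb ha' haa h0 h1).trans (step_b ha' hb hb' hbb h0 h1)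
end

section
/- If X and Y are random variables with finite means, continuous strictly increasing CDFs on their supporting intervals, and X ≤_c Y in the convex transform order, then P(X ≥ E[X]) ≥ P(Y ≥ E[Y]). -/
open MeasureTheory ProbabilityTheory Set Filter Topology
open scoped ENNReal NNReal

private lemma cdf_singleton_zero (μ : Measure ℝ) [IsProbabilityMeasure μ]
    (hc : Continuous fun x => cdf μ x) (a : ℝ) : μ {a} = 0 := by
  have hm : (cdf μ).measure = μ := measure_cdf μ
  have hl : Function.leftLim (⇑(cdf μ)) a = cdf μ a :=
    leftLim_eq_of_tendsto
      ((hc.tendsto a).mono_left nhdsWithin_le_nhds)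
  rw [← hm, StieltjesFunction.measure_singleton, hl, sub_self, ENNReal.ofReal_zero]

private lemma cdf_Iio (μ : Measure ℝ) [IsProbabilityMeasure μ]
    (hc : Continuous fun x => cdf μ x) (a : ℝ) :
    μ (Iio a) = ENNReal.ofReal (cdf μ a) := by
  have h1 : μ (Iic a) = μ (Iio a) := by
    refine le_antisymm ?_ (measure_mono Iio_subset_Iic_self)
    calc μ (Iic a) ≤ μ (Iio a ∪ {a}) := by rw [Iio_union_right]
    _ ≤ μ (Iio a) + μ {a} := measure_union_le _ _
    _ = μ (Iio a) := by rw [cdf_singleton_zero μ hc, add_zero]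
  rw [← h1, ← ofReal_cdf]

private lemma cdf_Ici (μ : Measure ℝ) [IsProbabilityMeasure μ]
    (hc : Continuous fun x => cdf μ x) (a : ℝ) :
    μ (Ici a) = 1 - ENNReal.ofReal (cdf μ a) := by
  rw [← compl_Iio, prob_compl_eq_one_sub measurableSet_Iio, cdf_Iio μ hc]

private lemma cdf_surj (μ : Measure ℝ) [IsProbabilityMeasure μ]
    (hc : Continuous fun x => cdf μ x) {c : ℝ} (h0 : 0 < c) (h1 : c < 1) :
    ∃ y, cdf μ y = c := by
  obtain ⟨a, ha⟩ := ((tendsto_cdf_atBot μ).eventually_lt_const h0).exists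
  obtain ⟨b, hb⟩ := ((tendsto_cdf_atTop μ).eventually_const_lt h1).exists
  have hab : a ≤ b := by
    by_contra h
    have := monotone_cdf μ (le_of_not_ge h)
    linarith
  obtain ⟨y, _, hy⟩ := intermediate_value_Icc hab hc.continuousOn ⟨ha.le, hb.le⟩
  exact ⟨y, hy⟩

private lemma mem_of_cdf (μ : Measure ℝ) [IsProbabilityMeasure μ] (K : Set ℝ)
    (hK : K.OrdConnected) (hμK : μ K = 1) {x : ℝ} (h0 : 0 < cdf μ x) (h1 : cdf μ x < 1) :
    x ∈ K := by
  have hKc : μ Kᶜ = 0 := by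
    rw [measure_compl hK.measurableSet (measure_ne_top μ K), hμK, measure_univ, tsub_self]
  have hlo : (K ∩ Iic x).Nonempty := by
    rw [nonempty_iff_ne_empty]
    intro h
    have hsub : Iic x ⊆ Kᶜ := fun y hy hyK =>
      eq_empty_iff_forall_notMem.1 h y ⟨hyK, hy⟩
    have h2 : μ (Iic x) = 0 := le_antisymm ((measure_mono hsub).trans_eq hKc) zero_le
    rw [← ofReal_cdf] at h2
    exact (ENNReal.ofReal_pos.2 h0).ne' h2
  have hhi : (K ∩ Ioi x).Nonempty := by
    rw [nonempty_iff_ne_empty]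
    intro h
    have hsub : Ioi x ⊆ Kᶜ := fun y hy hyK =>
      eq_empty_iff_forall_notMem.1 h y ⟨hyK, hy⟩
    have h2 : μ (Ioi x) = 0 := le_antisymm ((measure_mono hsub).trans_eq hKc) zero_le
    rw [← compl_Iic, prob_compl_eq_one_sub measurableSet_Iic, ← ofReal_cdf,
      tsub_eq_zero_iff_le] at h2
    have := ENNReal.one_le_ofReal.1 h2
    linarith
  obtain ⟨i, hiK, hix⟩ := hlo
  obtain ⟨j, hjK, hjx⟩ := hhi
  exact hK.out hiK hjK ⟨hix, le_of_lt hjx⟩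

private lemma cdf_level (μ : Measure ℝ) [IsProbabilityMeasure μ]
    (hc : Continuous fun x => cdf μ x) {c : ℝ} (h0 : 0 < c) (h1 : c < 1) :
    μ {x | cdf μ x ≤ c} = ENNReal.ofReal c := by
  obtain ⟨x₀, hx₀⟩ := cdf_surj μ hc h0 h1
  refine le_antisymm ?_ ?_
  · refine ENNReal.le_of_forall_pos_le_add fun ε hε _ => ?_
    set δ : ℝ := min (ε : ℝ) ((1 - c) / 2) with hδdef
    have hδ0 : 0 < δ := lt_min (by exact_mod_cast hε) (by linarith)
    have hδ1 : c + δ < 1 := by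
      have : δ ≤ (1 - c) / 2 := min_le_right _ _
      linarith
    obtain ⟨x₁, hx₁⟩ := cdf_surj μ hc (by linarith : (0:ℝ) < c + δ) hδ1
    have hsub : {x | cdf μ x ≤ c} ⊆ Iic x₁ := by
      intro x hx
      by_contra h
      simp only [mem_Iic, not_le] at h
      have h2 := monotone_cdf μ h.le
      rw [hx₁] at h2
      have hxc : cdf μ x ≤ c := hx
      linarith
    calc μ {x | cdf μ x ≤ c} ≤ μ (Iic x₁) := measure_mono hsub
      _ = ENNReal.ofReal (c + δ) := by rw [← ofReal_cdf, hx₁]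
      _ ≤ ENNReal.ofReal c + ENNReal.ofReal δ := ENNReal.ofReal_add_le
      _ ≤ ENNReal.ofReal c + ε := by
          gcongr
          refine le_trans (ENNReal.ofReal_le_ofReal (min_le_left _ _)) ?_
          rw [ENNReal.ofReal_coe_nnreal]
  · have h2 : Iic x₀ ⊆ {x | cdf μ x ≤ c} := fun y hy => (monotone_cdf μ hy).trans hx₀.le
    calc ENNReal.ofReal c = μ (Iic x₀) := by rw [← ofReal_cdf, hx₀]
      _ ≤ _ := measure_mono h2

private lemma cdf_mean_mem_Ioo (μ : Measure ℝ) [IsProbabilityMeasure μ]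
    (hc : Continuous fun x => cdf μ x) (hint : Integrable (fun x : ℝ => x) μ) :
    0 < cdf μ (∫ y, y ∂μ) ∧ cdf μ (∫ y, y ∂μ) < 1 := by
  set m := ∫ y, y ∂μ with hm
  have hsing : μ {m} = 0 := cdf_singleton_zero μ hc m
  have key : ∀ f : ℝ → ℝ, Integrable f μ → (∫ x, f x ∂μ) = 0 → (0 ≤ᵐ[μ] f) →
      (∀ x, f x = 0 ↔ x = m) → False := by
    intro f hfi hfz hfae hfiff
    have heq := (integral_eq_zero_iff_of_nonneg_ae hfae hfi).1 hfz
    have h1 : μ ({m}ᶜ : Set ℝ) = 0 := by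
      have h2 : μ {x : ℝ | ¬ (f x = (0 : ℝ → ℝ) x)} = 0 := ae_iff.1 heq
      have hset : {x : ℝ | ¬ (f x = (0 : ℝ → ℝ) x)} = ({m}ᶜ : Set ℝ) := by
        ext x
        simp [hfiff x]
      rw [← hset]
      exact h2
    have := (prob_compl_eq_zero_iff (measurableSet_singleton m)).1 h1
    rw [hsing] at this
    exact zero_ne_one this
  constructor
  · by_contra h
    push_neg at h
    have h0 : cdf μ m = 0 := le_antisymm h (cdf_nonneg μ m)
    have hIic : μ (Iic m) = 0 := by rw [← ofReal_cdf, h0, ENNReal.ofReal_zero]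
    refine key (fun x => x - m) (hint.sub (integrable_const m)) ?_ ?_ ?_
    · rw [integral_sub hint (integrable_const m), integral_const]
      simp [← hm]
    · refine ae_iff.2 (le_antisymm ((measure_mono ?_).trans hIic.le) zero_le)
      intro x hx
      simp only [mem_setOf_eq, Pi.zero_apply, not_le] at hx
      simp only [mem_Iic]
      linarith [hx]
    · intro x
      show x - m = 0 ↔ x = m
      rw [sub_eq_zero]
  · by_contra h
    push_neg at h
    have h0 : cdf μ m = 1 := le_antisymm (cdf_le_one μ m) h
    have hIoi : μ (Ioi m) = 0 := by
      rw [← compl_Iic, prob_compl_eq_one_sub measurableSet_Iic, ← ofReal_cdf, h0,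
        ENNReal.ofReal_one, tsub_self]
    refine key (fun x => m - x) ((integrable_const m).sub hint) ?_ ?_ ?_
    · rw [integral_sub (integrable_const m) hint, integral_const]
      simp [← hm]
    · refine ae_iff.2 (le_antisymm ((measure_mono ?_).trans hIoi.le) zero_le)
      intro x hx
      simp only [mem_setOf_eq, Pi.zero_apply, not_le] at hx
      simp only [mem_Ioi]
      linarith [hx]
    · intro x
      show m - x = 0 ↔ x = m
      rw [sub_eq_zero, eq_comm]

/-- Corollary 7: if `X ≤_c Y` then `P(X ≥ E X) ≥ P(Y ≥ E Y)`. -/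
theorem exceedance_of_mean_monotone_of_convex_order
    (P Q : Measure ℝ) [IsProbabilityMeasure P] [IsProbabilityMeasure Q]
    (hPint : Integrable id P) (hQint : Integrable id Q)
    (I J : Set ℝ) (hI : I.OrdConnected) (hJ : J.OrdConnected)
    (hPI : P I = 1) (hQJ : Q J = 1)
    (hFc : Continuous (fun x => cdf P x)) (hGc : Continuous (fun x => cdf Q x))
    (hF : StrictMonoOn (fun x => cdf P x) I)
    (hG : StrictMonoOn (fun x => cdf Q x) J)
    -- convex transform order `X ≤_c Y`:
    (hc : ConvexOn ℝ I (fun x => Function.invFun (fun y => cdf Q y) (cdf P x))) :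
    Q {x | (∫ y, y ∂Q) ≤ x} ≤ P {x | (∫ y, y ∂P) ≤ x} := by
  have hPint' : Integrable (fun x : ℝ => x) P := hPint
  have hQint' : Integrable (fun x : ℝ => x) Q := hQint
  set m := ∫ y, y ∂P with hm
  set n := ∫ y, y ∂Q with hn
  set φ : ℝ → ℝ := fun x => Function.invFun (fun y => cdf Q y) (cdf P x) with hφdef
  set S : Set ℝ := {x | 0 < cdf P x ∧ cdf P x < 1} with hSdef
  -- basic facts about S
  have hSopen : IsOpen S := by
    have : S = (fun x => cdf P x) ⁻¹' (Ioo 0 1) := rfl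
    rw [this]
    exact isOpen_Ioo.preimage hFc
  have hSmeas : MeasurableSet S := hSopen.measurableSet
  have hScompl : P Sᶜ = 0 := by
    set A := (fun x => cdf P x) ⁻¹' {0} with hA
    set B := (fun x => cdf P x) ⁻¹' {1} with hB
    have hsub : Sᶜ ⊆ A ∪ B := by
      intro x hx
      simp only [hSdef, mem_compl_iff, mem_setOf_eq, not_and_or, not_lt] at hx
      rcases hx with h | h
      · exact Or.inl (le_antisymm h (cdf_nonneg P x))
      · exact Or.inr (le_antisymm (cdf_le_one P x) h)
    have hPA : P A = 0 := by
      rcases eq_empty_or_nonempty A with h | h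
      · simp [h]
      · have hbdd : BddAbove A := by
          obtain ⟨b, hb⟩ := ((tendsto_cdf_atTop P).eventually_const_lt
            (by norm_num : (1:ℝ)/2 < 1)).exists
          refine ⟨b, fun x hx => ?_⟩
          by_contra hbx
          push_neg at hbx
          have h2 := monotone_cdf P hbx.le
          have hx0 : cdf P x = 0 := hx
          rw [hx0] at h2
          linarith
        have hclosed : IsClosed A := isClosed_singleton.preimage hFc
        have hmem := hclosed.csSup_mem h hbdd
        have hsub2 : A ⊆ Iic (sSup A) := fun x hx => le_csSup hbdd hx
        refine le_antisymm ((measure_mono hsub2).trans_eq ?_) zero_le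
        rw [← ofReal_cdf]
        have h3 : cdf P (sSup A) = 0 := hmem
        rw [h3, ENNReal.ofReal_zero]
    have hPB : P B = 0 := by
      rcases eq_empty_or_nonempty B with h | h
      · simp [h]
      · have hbdd : BddBelow B := by
          obtain ⟨a, ha⟩ := ((tendsto_cdf_atBot P).eventually_lt_const
            (by norm_num : (0:ℝ) < 1/2)).exists
          refine ⟨a, fun x hx => ?_⟩
          by_contra hax
          push_neg at hax
          have h2 := monotone_cdf P hax.le
          have hx1 : cdf P x = 1 := hx
          rw [hx1] at h2
          linarith
        have hclosed : IsClosed B := isClosed_singleton.preimage hFc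
        have hmem := hclosed.csInf_mem h hbdd
        have hsub2 : B ⊆ Ici (sInf B) := fun x hx => csInf_le hbdd hx
        refine le_antisymm ((measure_mono hsub2).trans_eq ?_) zero_le
        rw [cdf_Ici P hFc]
        have h3 : cdf P (sInf B) = 1 := hmem
        rw [h3, ENNReal.ofReal_one, tsub_self]
    refine le_antisymm ((measure_mono hsub).trans ?_) zero_le
    calc P (A ∪ B) ≤ P A + P B := measure_union_le _ _
      _ = 0 := by rw [hPA, hPB, add_zero]
  have hSsubI : S ⊆ I := fun x hx => mem_of_cdf P I hI hPI hx.1 hx.2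
  -- basic facts about φ on S
  have hGφ : ∀ x ∈ S, cdf Q (φ x) = cdf P x := fun x hx =>
    Function.invFun_eq (cdf_surj Q hGc hx.1 hx.2)
  have hφJ : ∀ x ∈ S, φ x ∈ J := fun x hx =>
    mem_of_cdf Q J hJ hQJ (by rw [hGφ x hx]; exact hx.1) (by rw [hGφ x hx]; exact hx.2)
  have hφmono : MonotoneOn φ S := by
    intro x hx y hy hxy
    by_contra h
    push_neg at h
    have h1 := hG (hφJ y hy) (hφJ x hx) h
    simp only at h1
    rw [hGφ x hx, hGφ y hy] at h1
    exact absurd (monotone_cdf P hxy) (not_le.2 h1)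
  have hPS : P.restrict S = P := by
    apply Measure.restrict_eq_self_of_ae_mem
    exact ae_iff.2 hScompl
  have hφae : AEMeasurable φ P := by
    have := aemeasurable_restrict_of_monotoneOn hSmeas hφmono (μ := P)
    rwa [hPS] at this
  -- the pushforward of P under φ is Q
  have hPinter : ∀ A : Set ℝ, P A = P (A ∩ S) := by
    intro A
    refine le_antisymm ?_ (measure_mono inter_subset_left)
    calc P A ≤ P ((A ∩ S) ∪ Sᶜ) := measure_mono (fun x hx => by
          by_cases h : x ∈ S
          exacts [Or.inl ⟨hx, h⟩, Or.inr h])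
      _ ≤ P (A ∩ S) + P Sᶜ := measure_union_le _ _
      _ = P (A ∩ S) := by rw [hScompl, add_zero]
  have hφiff : ∀ t : ℝ, ∀ x ∈ S, (φ x ≤ t ↔ cdf P x ≤ cdf Q t) := by
    intro t x hx
    constructor
    · intro h
      rw [← hGφ x hx]
      exact monotone_cdf Q h
    · intro h
      by_contra hlt
      push_neg at hlt
      have h2 : cdf Q t ≤ cdf Q (φ x) := monotone_cdf Q hlt.le
      rw [hGφ x hx] at h2
      have heq : cdf Q t = cdf P x := le_antisymm h2 h
      have htJ : t ∈ J := mem_of_cdf Q J hJ hQJ (by rw [heq]; exact hx.1)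
        (by rw [heq]; exact hx.2)
      have h3 := hG htJ (hφJ x hx) hlt
      simp only at h3
      rw [hGφ x hx, heq] at h3
      exact lt_irrefl _ h3
  have hmap : Measure.map φ P = Q := by
    have hprob : IsProbabilityMeasure (Measure.map φ P) := Measure.isProbabilityMeasure_map hφae
    refine Measure.ext_of_Iic _ _ (fun t => ?_)
    rw [Measure.map_apply_of_aemeasurable hφae measurableSet_Iic]
    rw [hPinter (φ ⁻¹' Iic t)]
    have hset : φ ⁻¹' Iic t ∩ S = {x | cdf P x ≤ cdf Q t} ∩ S := by
      ext x
      simp only [mem_inter_iff, mem_preimage, mem_Iic, mem_setOf_eq]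
      constructor
      · rintro ⟨h1, h2⟩; exact ⟨(hφiff t x h2).1 h1, h2⟩
      · rintro ⟨h1, h2⟩; exact ⟨(hφiff t x h2).2 h1, h2⟩
    rw [hset, ← ofReal_cdf Q t]
    rcases le_or_gt (cdf Q t) 0 with h0 | h0
    · have h1 : {x | cdf P x ≤ cdf Q t} ∩ S = ∅ := by
        ext x
        simp only [mem_inter_iff, mem_setOf_eq, mem_empty_iff_false, iff_false, not_and]
        intro hxc hxS
        exact absurd (lt_of_lt_of_le hxS.1 hxc) (not_lt.2 h0)
      rw [h1, measure_empty, ENNReal.ofReal_of_nonpos h0]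
    rcases le_or_gt 1 (cdf Q t) with h1 | h1
    · have hc1 : cdf Q t = 1 := le_antisymm (cdf_le_one Q t) h1
      have h2 : {x | cdf P x ≤ cdf Q t} ∩ S = S := by
        ext x
        refine ⟨fun hx => hx.2, fun hx => ⟨?_, hx⟩⟩
        rw [hc1]
        exact cdf_le_one P x
      rw [h2, hc1, ENNReal.ofReal_one]
      exact (prob_compl_eq_zero_iff hSmeas).1 hScompl
    · rw [← hPinter, cdf_level P hFc h0 h1]
  -- integrability of φ and the value of its integral
  have hφint : Integrable φ P := by
    have h1 : Integrable id (Measure.map φ P) := by rw [hmap]; exact hQint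
    have h2 := (integrable_map_measure (by rw [hmap]; exact hQint.aestronglyMeasurable)
      hφae).1 h1
    simpa using h2
  have hintegral : n = ∫ x, φ x ∂P := by
    rw [hn, ← hmap, integral_map hφae]
    rw [hmap]
    exact hQint.aestronglyMeasurable
  -- the mean m belongs to S
  have hmIoo := cdf_mean_mem_Ioo P hFc hPint'
  have hmS : m ∈ S := ⟨hmIoo.1, hmIoo.2⟩
  have hmI : m ∈ I := hSsubI hmS
  -- supporting line of φ at m
  obtain ⟨u, v, hmuv, huv⟩ := mem_nhds_iff_exists_Ioo_subset.1 (hSopen.mem_nhds hmS)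
  have hum : u < m := hmuv.1
  have hmv : m < v := hmuv.2
  set u' := (u + m) / 2 with hu'
  set v' := (m + v) / 2 with hv'
  have hu'S : u' ∈ S := huv ⟨by linarith, by linarith⟩
  have hv'S : v' ∈ S := huv ⟨by linarith, by linarith⟩
  have hu'I : u' ∈ I := hSsubI hu'S
  have hv'I : v' ∈ I := hSsubI hv'S
  have hu'm : u' < m := by rw [hu']; linarith
  have hv'm : m < v' := by rw [hv']; linarith
  set T := (fun y => (φ y - φ m) / (y - m)) '' (I ∩ Ioi m) with hT
  have hTne : T.Nonempty := ⟨_, ⟨v', ⟨hv'I, hv'm⟩, rfl⟩⟩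
  have hTbdd : BddBelow T := by
    refine ⟨(φ u' - φ m) / (u' - m), ?_⟩
    rintro z ⟨y, ⟨hyI, hym⟩, rfl⟩
    exact hc.secant_mono hmI hu'I hyI (ne_of_lt hu'm) (ne_of_gt hym)
      (le_of_lt (lt_trans hu'm hym))
  set cs := sInf T with hcs
  have hline : ∀ x ∈ I, φ m + cs * (x - m) ≤ φ x := by
    intro x hxI
    rcases lt_trichotomy x m with h | h | h
    · have h1 : (φ x - φ m) / (x - m) ≤ cs := by
        refine le_csInf hTne ?_
        rintro z ⟨y, ⟨hyI, hym⟩, rfl⟩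
        exact hc.secant_mono hmI hxI hyI (ne_of_lt h) (ne_of_gt hym)
          (le_of_lt (lt_trans h hym))
      have h2 := (div_le_iff_of_neg (by linarith : x - m < 0)).1 h1
      linarith
    · rw [h]; simp
    · have h1 : cs ≤ (φ x - φ m) / (x - m) := csInf_le hTbdd ⟨x, ⟨hxI, h⟩, rfl⟩
      have h2 := (le_div_iff₀ (by linarith : (0:ℝ) < x - m)).1 h1
      linarith
  -- Jensen-type inequality
  have hlin_int : Integrable (fun x => φ m + cs * (x - m)) P :=
    (integrable_const _).add ((hPint'.sub (integrable_const m)).const_mul cs)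
  have hle : (fun x => φ m + cs * (x - m)) ≤ᵐ[P] φ := by
    refine ae_iff.2 (le_antisymm ((measure_mono ?_).trans hScompl.le) zero_le)
    intro x hx hxS
    exact hx (hline x (hSsubI hxS))
  have hjensen : φ m ≤ n := by
    have h1 := integral_mono_ae hlin_int hφint hle
    have h2 : ∫ x, (φ m + cs * (x - m)) ∂P = φ m := by
      have e0 : Integrable (fun x : ℝ => x - m) P := by
        exact hPint'.sub (integrable_const m)
      have e1 : Integrable (fun x : ℝ => cs * (x - m)) P := e0.const_mul cs
      rw [integral_add (integrable_const _) e1, integral_const, integral_const_mul cs _,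
        integral_sub hPint' (integrable_const m), integral_const]
      simp [← hm]
    rw [hintegral]
    rw [h2] at h1
    exact h1
  -- conclude
  have hFmGn : cdf P m ≤ cdf Q n := by
    have h1 : cdf Q (φ m) ≤ cdf Q n := monotone_cdf Q hjensen
    rw [hGφ m hmS] at h1
    exact h1
  show Q (Ici n) ≤ P (Ici m)
  rw [cdf_Ici Q hGc, cdf_Ici P hFc]
  exact tsub_le_tsub_left (ENNReal.ofReal_le_ofReal hFmGn) 1
end

section
/- Let X ~ P and Y ~ Q be real random variables with absolutely continuous unimodal distributions supported on intervals, with unique modes mode(X) and mode(Y). If X ≤_c Y in the convex transform order, then P(X ≥ mode(X)) ≤ P(Y ≥ mode(Y)). -/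
open MeasureTheory ProbabilityTheory Set Filter
open scoped ENNReal Topology

namespace ExceedAux

/-- Replacing a density by its positive part does not change the measure. -/
lemma wd_congr (p : ℝ → ℝ) :
    (volume.withDensity fun x => ENNReal.ofReal (p x))
      = volume.withDensity fun x => ENNReal.ofReal (max (p x) 0) := by
  congr 1
  funext x
  rcases le_total 0 (p x) with h | h
  · rw [max_eq_left h]
  · rw [max_eq_right h, ENNReal.ofReal_eq_zero.mpr h, ENNReal.ofReal_zero]

/-- Continuity band for a continuous function. -/
lemma cont_band {p : ℝ → ℝ} (hp : Continuous p) (m ε : ℝ) (hε : 0 < ε) :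
    ∃ δ > 0, ∀ s ∈ Icc (m - δ) (m + δ), |p s - p m| < ε := by
  obtain ⟨δ, hδ0, hδ⟩ := Metric.continuousAt_iff.mp (hp.continuousAt (x := m)) ε hε
  refine ⟨δ / 2, by linarith, fun s hs => ?_⟩
  have hdist : dist s m < δ := by
    rw [Real.dist_eq]
    have h1 := hs.1; have h2 := hs.2
    rw [abs_lt]; constructor <;> linarith
  have := hδ hdist
  rwa [Real.dist_eq] at this

variable {M : Measure ℝ} [IsProbabilityMeasure M] {p : ℝ → ℝ}

lemma integrable_of_density (hp : Continuous p) (hp0 : ∀ x, 0 ≤ p x)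
    (hd : M = volume.withDensity fun x => ENNReal.ofReal (p x)) :
    Integrable p (volume : Measure ℝ) := by
  refine ⟨hp.aestronglyMeasurable, ?_⟩
  rw [hasFiniteIntegral_iff_ofReal (Eventually.of_forall hp0)]
  have huniv : (∫⁻ x, ENNReal.ofReal (p x)) = M univ := by
    rw [hd, withDensity_apply _ MeasurableSet.univ, Measure.restrict_univ]
  rw [huniv, measure_univ]
  exact ENNReal.one_lt_top

lemma cdf_diff (hp : Continuous p) (hp0 : ∀ x, 0 ≤ p x)
    (hd : M = volume.withDensity fun x => ENNReal.ofReal (p x))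
    {a b : ℝ} (hab : a ≤ b) :
    cdf M b - cdf M a = ∫ t in a..b, p t := by
  have hm : MeasurableSet (Ioc a b) := measurableSet_Ioc
  have hdisj : Disjoint (Iic a) (Ioc a b) := by
    rw [Set.disjoint_left]
    intro x hx hx'
    exact absurd (lt_of_le_of_lt hx hx'.1) (lt_irrefl x)
  have h1 : M (Iic b) = M (Iic a) + M (Ioc a b) := by
    rw [← Iic_union_Ioc_eq_Iic hab, measure_union hdisj hm]
  have h2 : M (Ioc a b) = ∫⁻ t in Ioc a b, ENNReal.ofReal (p t) := by
    rw [hd, withDensity_apply _ hm]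
  have h3 : (∫ t in a..b, p t)
      = (∫⁻ t in Ioc a b, ENNReal.ofReal (p t)).toReal := by
    rw [intervalIntegral.integral_of_le hab,
      integral_eq_lintegral_of_nonneg_ae (Eventually.of_forall fun x => hp0 x)
        hp.aestronglyMeasurable.restrict]
  rw [cdf_eq_real, cdf_eq_real, measureReal_def, measureReal_def, h1,
    ENNReal.toReal_add (measure_ne_top M _) (measure_ne_top M _), h3, ← h2]
  ring

lemma cdf_cont (hp : Continuous p) (hp0 : ∀ x, 0 ≤ p x)
    (hd : M = volume.withDensity fun x => ENNReal.ofReal (p x)) :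
    Continuous fun x => cdf M x := by
  have hint := integrable_of_density hp hp0 hd
  have hprim : Continuous fun x => ∫ t in (0:ℝ)..x, p t :=
    hint.continuous_primitive 0
  have heq : (fun x => cdf M x) = fun x => cdf M 0 + ∫ t in (0:ℝ)..x, p t := by
    funext x
    rcases le_total 0 x with h | h
    · have := cdf_diff hp hp0 hd h
      linarith
    · have h1 := cdf_diff hp hp0 hd h
      rw [intervalIntegral.integral_symm] at h1
      linarith
  rw [heq]
  exact continuous_const.add hprim

lemma density_vanish (hp : Continuous p) (hp0 : ∀ x, 0 ≤ p x)
    (hd : M = volume.withDensity fun x => ENNReal.ofReal (p x))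
    {J : Set ℝ} (hJ : J.OrdConnected) (hMJ : M J = 1) {t : ℝ} (ht : t ∉ J) :
    p t = 0 := by
  by_contra h0
  have hpt : 0 < p t := (hp0 t).lt_of_ne (Ne.symm h0)
  obtain ⟨η, hη0, hball⟩ := cont_band hp t (p t / 2) (by linarith)
  have hJc : M Jᶜ = 0 := by
    have hcompl := measure_compl hJ.measurableSet (measure_ne_top M J)
    rw [hMJ, measure_univ] at hcompl
    simpa using hcompl
  have key : ∀ S : Set ℝ, S ⊆ Jᶜ → MeasurableSet S →
      (∀ s ∈ S, p t / 2 ≤ p s) → volume S = ENNReal.ofReal η → False := by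
    intro S hSJ hSm hSlow hSvol
    have hS0 : M S = 0 := le_antisymm (hJc ▸ measure_mono hSJ) zero_le
    have hSlarge : ENNReal.ofReal (p t / 2) * volume S ≤ M S := by
      rw [hd, withDensity_apply _ hSm]
      calc ENNReal.ofReal (p t / 2) * volume S
          = ∫⁻ _ in S, ENNReal.ofReal (p t / 2) := (setLIntegral_const S _).symm
        _ ≤ ∫⁻ s in S, ENNReal.ofReal (p s) := by
            refine setLIntegral_mono (hp.measurable.ennreal_ofReal) ?_
            intro s hs
            exact ENNReal.ofReal_le_ofReal (hSlow s hs)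
    rw [hS0, hSvol] at hSlarge
    have hpos : (0 : ℝ≥0∞) < ENNReal.ofReal (p t / 2) * ENNReal.ofReal η := by
      apply ENNReal.mul_pos
      · exact (ENNReal.ofReal_pos.mpr (by linarith)).ne'
      · exact (ENNReal.ofReal_pos.mpr hη0).ne'
    exact absurd hSlarge (not_le.mpr hpos)
  have hside : (∀ s ∈ J, s < t) ∨ (∀ s ∈ J, t < s) := by
    by_contra hcon
    push_neg at hcon
    obtain ⟨⟨a, ha, hat⟩, ⟨b, hb, hbt⟩⟩ := hcon
    exact ht (hJ.out hb ha ⟨hbt, hat⟩)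
  rcases hside with hside | hside
  · refine key (Ioo t (t + η)) ?_ measurableSet_Ioo ?_ ?_
    · intro s hs hsJ
      exact absurd (hside s hsJ) (not_lt.mpr hs.1.le)
    · intro s hs
      have h1 := (abs_lt.mp (hball s ⟨by linarith [hs.1], hs.2.le⟩)).1
      linarith
    · rw [Real.volume_Ioo]; congr 1; ring
  · refine key (Ioo (t - η) t) ?_ measurableSet_Ioo ?_ ?_
    · intro s hs hsJ
      exact absurd (hside s hsJ) (not_lt.mpr hs.2.le)
    · intro s hs
      have h1 := (abs_lt.mp (hball s ⟨hs.1.le, by linarith [hs.2]⟩)).1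
      linarith
    · rw [Real.volume_Ioo]; congr 1; ring

lemma cdf_pos_of_density_pos (hp : Continuous p) (hp0 : ∀ x, 0 ≤ p x)
    (hd : M = volume.withDensity fun x => ENNReal.ofReal (p x))
    {m : ℝ} (hpm : 0 < p m) : 0 < cdf M m := by
  obtain ⟨δ, hδ0, hband⟩ := cont_band hp m (p m / 2) (by linarith)
  have hdiff := cdf_diff hp hp0 hd (show m - δ ≤ m by linarith)
  have hlow : ∀ t ∈ Icc (m - δ) m, p m / 2 ≤ p t := by
    intro t ht
    have := (abs_lt.mp (hband t ⟨ht.1, by linarith [ht.2]⟩)).1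
    linarith
  have hint : (p m / 2) * δ ≤ ∫ t in (m - δ)..m, p t := by
    have hmono := intervalIntegral.integral_mono_on (show m - δ ≤ m by linarith)
      (intervalIntegrable_const (c := p m / 2))
      ((integrable_of_density hp hp0 hd).intervalIntegrable) hlow
    rw [intervalIntegral.integral_const] at hmono
    have : (m - (m - δ)) • (p m / 2) = (p m / 2) * δ := by
      rw [smul_eq_mul]; ring
    linarith [hmono, this ▸ hmono]
  have h0 : 0 ≤ cdf M (m - δ) := cdf_nonneg M _
  nlinarith

lemma exists_cdf_gt (hp : Continuous p) (hp0 : ∀ x, 0 ≤ p x)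
    (hd : M = volume.withDensity fun x => ENNReal.ofReal (p x))
    {I : Set ℝ} (hMI : M I = 1) {x0 : ℝ} (hx0 : x0 ∈ I) {v : ℝ} (hv : v < 1) :
    ∃ x ∈ I, v < cdf M x := by
  have hcont : Continuous fun x => cdf M x := cdf_cont hp hp0 hd
  by_contra hcon
  push_neg at hcon
  by_cases hbdd : BddAbove I
  · set b := sSup I with hb
    have hsub : I ⊆ Iic b := fun x hx => le_csSup hbdd hx
    have hbv : cdf M b ≤ v := by
      have htend : Tendsto (fun n : ℕ => cdf M (b - 1 / (n + 1))) atTop (𝓝 (cdf M b)) := by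
        refine (hcont.tendsto b).comp ?_
        have h1 : Tendsto (fun n : ℕ => b - 1 / (n + 1 : ℝ)) atTop (𝓝 (b - 0)) :=
          tendsto_const_nhds.sub tendsto_one_div_add_atTop_nhds_zero_nat
        simpa using h1
      refine le_of_tendsto htend (Eventually.of_forall fun n => ?_)
      have hlt : b - 1 / (n + 1 : ℝ) < b := by
        have : (0:ℝ) < 1 / (n + 1 : ℝ) := by positivity
        linarith
      obtain ⟨z, hz, hz2⟩ := exists_lt_of_lt_csSup ⟨x0, hx0⟩ hlt
      exact le_trans (monotone_cdf M hz2.le) (hcon z hz)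
    have hle : (1:ℝ) ≤ v := by
      have h1 : M I ≤ M (Iic b) := measure_mono hsub
      rw [hMI] at h1
      have h2 := ENNReal.toReal_mono (measure_ne_top M _) h1
      rw [ENNReal.toReal_one, ← measureReal_def, ← cdf_eq_real] at h2
      linarith
    linarith
  · have hall : ∀ x : ℝ, cdf M x ≤ v := by
      intro x
      obtain ⟨z, hz, hxz⟩ : ∃ z ∈ I, x < z := by
        by_contra hc
        push_neg at hc
        exact hbdd ⟨x, fun z hz => hc z hz⟩
      exact le_trans (monotone_cdf M hxz.le) (hcon z hz)
    have := le_of_tendsto (tendsto_cdf_atTop M) (Eventually.of_forall hall)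
    linarith

lemma cdf_surj (hp : Continuous p) (hp0 : ∀ x, 0 ≤ p x)
    (hd : M = volume.withDensity fun x => ENNReal.ofReal (p x))
    {v : ℝ} (h0 : 0 < v) (h1 : v < 1) : ∃ y, cdf M y = v := by
  have hcont : Continuous fun x => cdf M x := cdf_cont hp hp0 hd
  obtain ⟨a, ha⟩ := ((tendsto_cdf_atBot M).eventually_lt_const h0).exists
  obtain ⟨b, hb⟩ := ((tendsto_cdf_atTop M).eventually_const_lt h1).exists
  have hab : a ≤ b := ((monotone_cdf M).reflect_lt (lt_trans ha hb)).le
  obtain ⟨y, _, hy⟩ := intermediate_value_Icc hab hcont.continuousOn ⟨ha.le, hb.le⟩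
  exact ⟨y, hy⟩

lemma singleton_zero
    (hd : M = volume.withDensity fun x => ENNReal.ofReal (p x)) (x : ℝ) :
    M {x} = 0 := by
  rw [hd]
  exact (withDensity_absolutelyContinuous volume _) Real.volume_singleton

end ExceedAux

open ExceedAux

set_option maxHeartbeats 2000000 in
/-- Corollary 10 (modes): if `X ≤_c Y` for unimodal absolutely continuous
distributions, then `P(X ≥ mode X) ≤ P(Y ≥ mode Y)`. -/
theorem exceedance_of_mode_monotone_of_convex_order
    (P Q : Measure ℝ) [IsProbabilityMeasure P] [IsProbabilityMeasure Q]
    (I J : Set ℝ) (hI : I.OrdConnected) (hJ : J.OrdConnected)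
    (hPI : P I = 1) (hQJ : Q J = 1)
    (f g : ℝ → ℝ) (hf : Continuous f) (hg : Continuous g)
    (hPd : P = volume.withDensity (fun x => ENNReal.ofReal (f x)))
    (hQd : Q = volume.withDensity (fun x => ENNReal.ofReal (g x)))
    (mP mQ : ℝ)
    -- unique modes:
    (hmP : mP ∈ I ∧ ∀ x ∈ I, x ≠ mP → f x < f mP)
    (hmQ : mQ ∈ J ∧ ∀ x ∈ J, x ≠ mQ → g x < g mQ)
    (hF : StrictMonoOn (fun x => cdf P x) I)
    (hG : StrictMonoOn (fun x => cdf Q x) J)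
    -- convex transform order `X ≤_c Y`:
    (hc : ConvexOn ℝ I (fun x => Function.invFun (fun y => cdf Q y) (cdf P x))) :
    P {x | mP ≤ x} ≤ Q {x | mQ ≤ x} := by
  obtain ⟨hmPI, hmPmax⟩ := hmP
  obtain ⟨hmQJ, hmQmax⟩ := hmQ
  clear hF hG
  set fp : ℝ → ℝ := fun x => max (f x) 0 with hfpdef
  set gp : ℝ → ℝ := fun x => max (g x) 0 with hgpdef
  have hfpc : Continuous fp := hf.max continuous_const
  have hgpc : Continuous gp := hg.max continuous_const
  have hfp0 : ∀ x, 0 ≤ fp x := fun x => le_max_right _ _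
  have hgp0 : ∀ x, 0 ≤ gp x := fun x => le_max_right _ _
  have hPd' : P = volume.withDensity fun x => ENNReal.ofReal (fp x) := by
    rw [hPd]; exact wd_congr f
  have hQd' : Q = volume.withDensity fun x => ENNReal.ofReal (gp x) := by
    rw [hQd]; exact wd_congr g
  -- positivity of the density at the mode
  have hA : 0 < f mP := by
    by_contra hA
    push_neg at hA
    have hzero : ∀ x ∈ I, ENNReal.ofReal (fp x) = 0 := by
      intro x hx
      rcases eq_or_ne x mP with rfl | hne
      · have : fp x = 0 := max_eq_right hA
        simp [this]
      · have h1 := hmPmax x hx hne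
        have : fp x = 0 := max_eq_right (by linarith)
        simp [this]
    have hPI0 : P I = 0 := by
      rw [hPd', withDensity_apply _ hI.measurableSet]
      calc ∫⁻ x in I, ENNReal.ofReal (fp x) = ∫⁻ _ in I, (0:ℝ≥0∞) :=
            setLIntegral_congr_fun hI.measurableSet
              (fun x hx => hzero x hx)
        _ = 0 := by simp
    rw [hPI0] at hPI
    exact zero_ne_one hPI
  have hB : 0 < g mQ := by
    by_contra hB
    push_neg at hB
    have hzero : ∀ x ∈ J, ENNReal.ofReal (gp x) = 0 := by
      intro x hx
      rcases eq_or_ne x mQ with rfl | hne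
      · have : gp x = 0 := max_eq_right hB
        simp [this]
      · have h1 := hmQmax x hx hne
        have : gp x = 0 := max_eq_right (by linarith)
        simp [this]
    have hQJ0 : Q J = 0 := by
      rw [hQd', withDensity_apply _ hJ.measurableSet]
      calc ∫⁻ x in J, ENNReal.ofReal (gp x) = ∫⁻ _ in J, (0:ℝ≥0∞) :=
            setLIntegral_congr_fun hJ.measurableSet
              (fun x hx => hzero x hx)
        _ = 0 := by simp
    rw [hQJ0] at hQJ
    exact zero_ne_one hQJ
  have hfpm : fp mP = f mP := max_eq_left hA.le
  have hgpm : gp mQ = g mQ := max_eq_left hB.le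
  have hfple : ∀ x ∈ I, fp x ≤ f mP := by
    intro x hx
    rcases eq_or_ne x mP with rfl | hne
    · exact hfpm.le
    · exact max_le (hmPmax x hx hne).le hA.le
  have hgplt : ∀ y, y ≠ mQ → gp y < g mQ := by
    intro y hy
    by_cases hyJ : y ∈ J
    · exact max_lt (hmQmax y hyJ hy) hB
    · have hv := density_vanish hgpc hgp0 hQd' hJ hQJ hyJ
      rw [hv]
      exact hB
  have hFc : Continuous fun x => cdf P x := cdf_cont hfpc hfp0 hPd'
  have hu0 : 0 < cdf P mP :=
    cdf_pos_of_density_pos hfpc hfp0 hPd' (show 0 < fp mP by rw [hfpm]; exact hA)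
  -- The key inequality between the cdfs at the modes.
  have key : cdf Q mQ ≤ cdf P mP := by
    by_contra hcu
    push_neg at hcu
    set u := cdf P mP with hudef
    set c := cdf Q mQ with hcdef
    have hc1 : c ≤ 1 := cdf_le_one Q mQ
    have hu1 : u < 1 := lt_of_lt_of_le hcu hc1
    set v0 : ℝ := (u + c) / 2 with hv0def
    have huv0 : u < v0 := by rw [hv0def]; linarith
    have hv0c : v0 < c := by rw [hv0def]; linarith
    have hv00 : 0 < v0 := lt_trans hu0 huv0
    have hv01 : v0 < 1 := lt_of_lt_of_le hv0c hc1
    obtain ⟨yhat, hyhat⟩ := cdf_surj hgpc hgp0 hQd' hv00 hv01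
    obtain ⟨w, hwI, hw⟩ := exists_cdf_gt hfpc hfp0 hPd' hPI hmPI hv01
    have hmPw : mP < w := (monotone_cdf P).reflect_lt (by linarith)
    set φ : ℝ → ℝ := fun x => Function.invFun (fun y => cdf Q y) (cdf P x) with hφdef
    have hinv : ∀ x : ℝ, 0 < cdf P x → cdf P x < 1 → cdf Q (φ x) = cdf P x := by
      intro x h1 h2
      obtain ⟨y, hy⟩ := cdf_surj hgpc hgp0 hQd' h1 h2
      exact Function.invFun_eq ⟨y, hy⟩
    have hy0 : cdf Q (φ mP) = u := hinv mP hu0 hu1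
    have hy0hat : φ mP < yhat := (monotone_cdf Q).reflect_lt (by rw [hy0, hyhat]; exact huv0)
    have hyhatmQ : yhat < mQ := (monotone_cdf Q).reflect_lt (by rw [hyhat]; exact hv0c)
    obtain ⟨ym, hymmem, hymmax⟩ := isCompact_Icc.exists_isMaxOn
      (nonempty_Icc.mpr hy0hat.le) hgpc.continuousOn
    set B' := gp ym with hB'def
    have hB'lt : B' < g mQ := by
      refine hgplt ym ?_
      intro hh
      have h2 := hymmem.2
      rw [hh] at h2
      linarith
    have hB'0 : 0 ≤ B' := hgp0 ym
    set A := f mP with hAdef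
    set B := g mQ with hBdef
    set ε : ℝ := min (min (A / 2) (B / 2)) ((A * (B - B')) / (2 * (A + B))) with hεdef
    have hε0 : 0 < ε := by
      refine lt_min (lt_min (by linarith) (by linarith)) ?_
      have h1 : 0 < A * (B - B') := mul_pos hA (by linarith)
      have h2 : (0:ℝ) < 2 * (A + B) := by linarith
      positivity
    have hεA : ε < A := by
      have h1 : ε ≤ A / 2 := le_trans (min_le_left _ _) (min_le_left _ _)
      linarith
    have hεB : ε < B := by
      have h1 : ε ≤ B / 2 := le_trans (min_le_left _ _) (min_le_right _ _)
      linarith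
    have hεkey : ε * (A + B) < A * (B - B') := by
      have h1 : ε ≤ A * (B - B') / (2 * (A + B)) := min_le_right _ _
      have hAB : (0:ℝ) < A + B := by linarith
      have hTpos : 0 < A * (B - B') := mul_pos hA (by linarith)
      have h2 : ε * (A + B) ≤ A * (B - B') / (2 * (A + B)) * (A + B) :=
        mul_le_mul_of_nonneg_right h1 hAB.le
      have h3 : A * (B - B') / (2 * (A + B)) * (A + B) = A * (B - B') / 2 := by
        field_simp
      rw [h3] at h2
      linarith
    obtain ⟨δf, hδf0, hδf⟩ := cont_band hfpc mP ε hε0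
    obtain ⟨δ2, hδ20, hδ2⟩ := cont_band hFc mP (v0 - u) (by linarith)
    obtain ⟨δg, hδg0, hδg⟩ := cont_band hgpc mQ ε hε0
    -- the point x1, slightly to the right of the mode mP
    set x1 := min w (mP + min δf δ2) with hx1def
    have hmPx1 : mP < x1 := by
      refine lt_min hmPw ?_
      have h1 := lt_min hδf0 hδ20
      linarith
    have hx1I : x1 ∈ I := hI.out hmPI hwI ⟨hmPx1.le, min_le_left _ _⟩
    have hx1f : x1 ≤ mP + δf := by
      have h1 : min δf δ2 ≤ δf := min_le_left _ _
      have h2 : x1 ≤ mP + min δf δ2 := min_le_right _ _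
      linarith
    have hx1δ2 : x1 ≤ mP + δ2 := by
      have h1 : min δf δ2 ≤ δ2 := min_le_right _ _
      have h2 : x1 ≤ mP + min δf δ2 := min_le_right _ _
      linarith
    set v1 := cdf P x1 with hv1def
    have hbound2 : (A - ε) * (x1 - mP) ≤ v1 - u := by
      have hdiffP := cdf_diff hfpc hfp0 hPd' hmPx1.le
      have hlow : ∀ t ∈ Icc mP x1, A - ε ≤ fp t := by
        intro t ht
        have hband := (abs_lt.mp (hδf t ⟨by linarith [ht.1, hδf0], by linarith [ht.2]⟩)).1
        rw [hfpm] at hband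
        linarith
      have hmono := intervalIntegral.integral_mono_on hmPx1.le
        (intervalIntegrable_const (c := A - ε))
        ((integrable_of_density hfpc hfp0 hPd').intervalIntegrable) hlow
      rw [intervalIntegral.integral_const, smul_eq_mul] at hmono
      linarith [hdiffP, hmono]
    have hv1u : u < v1 := by
      have h1 : 0 < (A - ε) * (x1 - mP) := mul_pos (by linarith) (by linarith)
      linarith
    have hv1v0 : v1 < v0 := by
      have hband := (abs_lt.mp (hδ2 x1 ⟨by linarith, by linarith⟩)).2
      linarith
    have hv1c : v1 < c := lt_trans hv1v0 hv0c
    have hv10 : 0 < v1 := lt_trans hu0 hv1u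
    have hv11 : v1 < 1 := lt_of_lt_of_le hv1c hc1
    have hy1 : cdf Q (φ x1) = v1 := hinv x1 hv10 hv11
    have hy01 : φ mP < φ x1 := (monotone_cdf Q).reflect_lt (by rw [hy0, hy1]; exact hv1u)
    have hy1hat : φ x1 < yhat := (monotone_cdf Q).reflect_lt (by rw [hy1, hyhat]; exact hv1v0)
    have hbound1 : v1 - u ≤ B' * (φ x1 - φ mP) := by
      have hdiffQ := cdf_diff hgpc hgp0 hQd' hy01.le
      have hup : ∀ t ∈ Icc (φ mP) (φ x1), gp t ≤ B' := by
        intro t ht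
        exact hymmax ⟨ht.1, le_trans ht.2 hy1hat.le⟩
      have hmono := intervalIntegral.integral_mono_on hy01.le
        ((integrable_of_density hgpc hgp0 hQd').intervalIntegrable)
        (intervalIntegrable_const (c := B')) hup
      rw [intervalIntegral.integral_const, smul_eq_mul] at hmono
      rw [← hy0, ← hy1]
      linarith [hdiffQ, hmono]
    -- g is at least B - ε just below mQ
    have hgplow : ∀ t ∈ Icc (mQ - δg) mQ, B - ε ≤ gp t := by
      intro t ht
      have hband := (abs_lt.mp (hδg t ⟨ht.1, by linarith [ht.2, hδg0]⟩)).1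
      rw [hgpm] at hband
      linarith
    set d := cdf Q (mQ - δg) with hddef
    have hdc : d < c := by
      have hdiffQ := cdf_diff hgpc hgp0 hQd' (show mQ - δg ≤ mQ by linarith)
      have hmono := intervalIntegral.integral_mono_on (show mQ - δg ≤ mQ by linarith)
        (intervalIntegrable_const (c := B - ε))
        ((integrable_of_density hgpc hgp0 hQd').intervalIntegrable) hgplow
      rw [intervalIntegral.integral_const, smul_eq_mul] at hmono
      have hpos : 0 < (mQ - (mQ - δg)) * (B - ε) := mul_pos (by linarith) (by linarith)
      linarith [hdiffQ, hmono, hpos]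
    set v2 := (max v1 d + c) / 2 with hv2def
    set v3 := (v2 + c) / 2 with hv3def
    have hmaxc : max v1 d < c := max_lt hv1c hdc
    have hm'v2 : max v1 d < v2 := by rw [hv2def]; linarith
    have hv12 : v1 < v2 := lt_of_le_of_lt (le_max_left _ _) hm'v2
    have hdv2 : d < v2 := lt_of_le_of_lt (le_max_right _ _) hm'v2
    have hv2c : v2 < c := by rw [hv2def]; linarith
    have hv23 : v2 < v3 := by rw [hv3def]; linarith
    have hv3c : v3 < c := by rw [hv3def]; linarith
    have hv20 : 0 < v2 := lt_trans hv10 hv12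
    have hv30 : 0 < v3 := lt_trans hv20 hv23
    have hv21 : v2 < 1 := lt_of_lt_of_le hv2c hc1
    have hv31 : v3 < 1 := lt_of_lt_of_le hv3c hc1
    obtain ⟨w2, hw2I, hw2⟩ := exists_cdf_gt hfpc hfp0 hPd' hPI hmPI hv31
    have hmPw2 : mP ≤ w2 := ((monotone_cdf P).reflect_lt (show cdf P mP < cdf P w2 by
      simp only [← hudef]; linarith)).le
    obtain ⟨x2, hx2mem, hx2⟩ := intermediate_value_Icc hmPw2 hFc.continuousOn
      (show v2 ∈ Icc (cdf P mP) (cdf P w2) from ⟨by simp only [← hudef]; linarith, by linarith⟩)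
    obtain ⟨x3, hx3mem, hx3⟩ := intermediate_value_Icc hmPw2 hFc.continuousOn
      (show v3 ∈ Icc (cdf P mP) (cdf P w2) from ⟨by simp only [← hudef]; linarith, by linarith⟩)
    replace hx2 : cdf P x2 = v2 := hx2
    replace hx3 : cdf P x3 = v3 := hx3
    have hx2I : x2 ∈ I := hI.out hmPI hw2I hx2mem
    have hx3I : x3 ∈ I := hI.out hmPI hw2I hx3mem
    have hx12 : x1 < x2 := (monotone_cdf P).reflect_lt (by rw [hx2, ← hv1def]; exact hv12)
    have hx23 : x2 < x3 := (monotone_cdf P).reflect_lt (by rw [hx2, hx3]; exact hv23)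
    have hy2 : cdf Q (φ x2) = v2 := by
      have h1 := hinv x2 (by rw [hx2]; exact hv20) (by rw [hx2]; exact hv21)
      rw [hx2] at h1
      exact h1
    have hy3 : cdf Q (φ x3) = v3 := by
      have h1 := hinv x3 (by rw [hx3]; exact hv30) (by rw [hx3]; exact hv31)
      rw [hx3] at h1
      exact h1
    have hy23 : φ x2 < φ x3 := (monotone_cdf Q).reflect_lt (by rw [hy2, hy3]; exact hv23)
    have hy2low : mQ - δg < φ x2 := (monotone_cdf Q).reflect_lt (by rw [hy2, ← hddef]; exact hdv2)
    have hy3mQ : φ x3 < mQ := (monotone_cdf Q).reflect_lt (by rw [hy3, ← hcdef]; exact hv3c)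
    have hbound3 : (B - ε) * (φ x3 - φ x2) ≤ v3 - v2 := by
      have hdiffQ := cdf_diff hgpc hgp0 hQd' hy23.le
      have hlow : ∀ t ∈ Icc (φ x2) (φ x3), B - ε ≤ gp t := by
        intro t ht
        exact hgplow t ⟨by linarith [ht.1, hy2low], by linarith [ht.2, hy3mQ]⟩
      have hmono := intervalIntegral.integral_mono_on hy23.le
        (intervalIntegrable_const (c := B - ε))
        ((integrable_of_density hgpc hgp0 hQd').intervalIntegrable) hlow
      rw [intervalIntegral.integral_const, smul_eq_mul] at hmono
      rw [← hy2, ← hy3]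
      linarith [hdiffQ, hmono]
    have hbound4 : v3 - v2 ≤ A * (x3 - x2) := by
      have hdiffP := cdf_diff hfpc hfp0 hPd' hx23.le
      have hup : ∀ t ∈ Icc x2 x3, fp t ≤ A := by
        intro t ht
        exact hfple t (hI.out hx2I hx3I ht)
      have hmono := intervalIntegral.integral_mono_on hx23.le
        ((integrable_of_density hfpc hfp0 hPd').intervalIntegrable)
        (intervalIntegrable_const (c := A)) hup
      rw [intervalIntegral.integral_const, smul_eq_mul] at hmono
      rw [← hx2, ← hx3]
      linarith [hdiffP, hmono]
    -- convexity: compare slopes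
    have hs1 := hc.slope_mono_adjacent hmPI hx2I hmPx1 hx12
    have hs2 := hc.slope_mono_adjacent hx1I hx3I hx12 hx23
    have hs3 := hs1.trans hs2
    have hcross : (φ x1 - φ mP) * (x3 - x2) ≤ (φ x3 - φ x2) * (x1 - mP) := by
      rwa [div_le_div_iff₀ (by linarith) (by linarith)] at hs3
    have h5 : (A - ε) * (x1 - mP) ≤ B' * (φ x1 - φ mP) := le_trans hbound2 hbound1
    have h6 : (B - ε) * (φ x3 - φ x2) ≤ A * (x3 - x2) := le_trans hbound3 hbound4
    have hp1 : 0 < x1 - mP := by linarith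
    have hp2 : 0 < φ x1 - φ mP := by linarith [hy01]
    have hp3 : 0 < x3 - x2 := by linarith
    have hp4 : 0 < φ x3 - φ x2 := by linarith [hy23]
    have hm1 : ((A - ε) * (x1 - mP)) * ((B - ε) * (φ x3 - φ x2))
        ≤ (B' * (φ x1 - φ mP)) * (A * (x3 - x2)) :=
      mul_le_mul h5 h6 (mul_pos (by linarith) hp4).le (mul_nonneg hB'0 hp2.le)
    have hm3 : (A * B') * ((φ x1 - φ mP) * (x3 - x2))
        ≤ (A * B') * ((φ x3 - φ x2) * (x1 - mP)) :=
      mul_le_mul_of_nonneg_left hcross (mul_nonneg hA.le hB'0)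
    have h7 : (A - ε) * (B - ε) ≤ A * B' := by
      have hq : 0 < (x1 - mP) * (φ x3 - φ x2) := mul_pos hp1 hp4
      have hr1 : ((A - ε) * (B - ε)) * ((x1 - mP) * (φ x3 - φ x2))
          ≤ (A * B') * ((x1 - mP) * (φ x3 - φ x2)) := by
        calc ((A - ε) * (B - ε)) * ((x1 - mP) * (φ x3 - φ x2))
            = ((A - ε) * (x1 - mP)) * ((B - ε) * (φ x3 - φ x2)) := by ring
          _ ≤ (B' * (φ x1 - φ mP)) * (A * (x3 - x2)) := hm1
          _ = (A * B') * ((φ x1 - φ mP) * (x3 - x2)) := by ring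
          _ ≤ (A * B') * ((φ x3 - φ x2) * (x1 - mP)) := hm3
          _ = (A * B') * ((x1 - mP) * (φ x3 - φ x2)) := by ring
      exact le_of_mul_le_mul_right hr1 hq
    have hexp : A * B - ε * A - ε * B + ε * ε ≤ A * B' := by linarith [h7]
    linarith [hexp, hεkey, mul_self_nonneg ε]
  -- Conclude from `cdf Q mQ ≤ cdf P mP`.
  have hfinal : ∀ (M : Measure ℝ) [IsProbabilityMeasure M], (∀ x : ℝ, M {x} = 0) →
      ∀ m : ℝ, M {x | m ≤ x} = 1 - M (Iic m) := by
    intro M hMinst hsing m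
    have h1 : M (Iic m) = M (Iio m) := by
      refine le_antisymm ?_ (measure_mono Iio_subset_Iic_self)
      calc M (Iic m) = M (insert m (Iio m)) := by rw [Iio_insert]
        _ ≤ M {m} + M (Iio m) := by rw [Set.insert_eq]; exact measure_union_le _ _
        _ = M (Iio m) := by rw [hsing m, zero_add]
    have h2 : {x : ℝ | m ≤ x} = (Iio m)ᶜ := by rw [compl_Iio]; rfl
    rw [h2, measure_compl measurableSet_Iio (measure_ne_top M _), measure_univ, h1]
  have hPsing : ∀ x : ℝ, P {x} = 0 := fun x => singleton_zero hPd' x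
  have hQsing : ∀ x : ℝ, Q {x} = 0 := fun x => singleton_zero hQd' x
  rw [hfinal P hPsing mP, hfinal Q hQsing mQ]
  refine tsub_le_tsub_left ?_ 1
  exact (ENNReal.toReal_le_toReal (measure_ne_top Q _) (measure_ne_top P _)).mp
    (by rw [← measureReal_def, ← measureReal_def, ← cdf_eq_real, ← cdf_eq_real]; exact key)
end

section
/- Let P be a positively skewed probability distribution (meaning -X ≤_c X for X ~ P, in the convex transform order) with a continuous strictly increasing CDF on its supporting interval. If P is unimodal with mode m₀, then there exists a median m₁ of P with m₀ ≤ m₁. -/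
open MeasureTheory ProbabilityTheory Set Filter
open scoped ENNReal

set_option maxHeartbeats 2000000 in
/-- Theorem 14 (mode–median): a positively skewed unimodal distribution has a
median at least as large as its mode. -/
theorem mode_le_median_of_positively_skewed
    (P : Measure ℝ) [IsProbabilityMeasure P]
    (I : Set ℝ) (hI : I.OrdConnected) (hPI : P I = 1)
    (hFc : Continuous (fun x => cdf P x))
    (hF : StrictMonoOn (fun x => cdf P x) I)
    -- unimodality: a continuous density with unique maximizer `m₀`:
    (f : ℝ → ℝ) (hf : Continuous f)
    (hPd : P = volume.withDensity (fun x => ENNReal.ofReal (f x)))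
    (m₀ : ℝ) (hm₀ : m₀ ∈ I ∧ ∀ x ∈ I, x ≠ m₀ → f x < f m₀)
    -- positive skewness: `-X ≤_c X`:
    (hskew : ConvexOn ℝ ((fun x => -x) '' I)
      (fun x => Function.invFun (fun y => cdf P y)
        (cdf (Measure.map (fun z => -z) P) x))) :
    ∃ m₁ : ℝ, P (Set.Iic m₁) ≥ 1 / 2 ∧ P (Set.Ici m₁) ≥ 1 / 2 ∧ m₀ ≤ m₁ := by
  classical
  -- basic facts about the cdf
  have hFmono : Monotone (fun x => cdf P x) := (cdf P).mono
  have hmax : ∀ r : ℝ, ENNReal.ofReal (max r 0) = ENNReal.ofReal r := by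
    intro r; rcases le_total r 0 with h | h
    · simp [max_eq_right h, ENNReal.ofReal_eq_zero.2 h]
    · simp [max_eq_left h]
  set g : ℝ → ℝ := fun x => max (f x) 0 with hgdef
  have hgc : Continuous g := hf.max continuous_const
  have hgnn : ∀ x, 0 ≤ g x := fun x => le_max_right _ _
  -- the mass of an interval is the integral of the (truncated) density
  have hmass : ∀ a b : ℝ, a ≤ b → cdf P b - cdf P a = ∫ x in Set.Ioc a b, g x := by
    intro a b hab
    have hint : IntegrableOn g (Set.Ioc a b) volume := hgc.integrableOn_Ioc
    have hPab : P (Iic b) = P (Iic a) + P (Ioc a b) := by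
      rw [← Iic_union_Ioc_eq_Iic hab, measure_union (Iic_disjoint_Ioc le_rfl) measurableSet_Ioc]
    have hset : P (Ioc a b) = ENNReal.ofReal (∫ x in Set.Ioc a b, g x) := by
      rw [hPd, withDensity_apply _ measurableSet_Ioc,
        ofReal_integral_eq_lintegral_ofReal hint (ae_of_all _ hgnn)]
      exact lintegral_congr fun x => (hmax (f x)).symm
    have hnn : 0 ≤ ∫ x in Set.Ioc a b, g x :=
      setIntegral_nonneg measurableSet_Ioc fun x _ => hgnn x
    rw [cdf_eq_real, cdf_eq_real, measureReal_def, measureReal_def, hPab,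
      ENNReal.toReal_add (measure_ne_top _ _) (measure_ne_top _ _), hset,
      ENNReal.toReal_ofReal hnn]
    ring
  -- the density is positive at the mode
  have hfpos : 0 < f m₀ := by
    by_contra h
    push_neg at h
    have hsub : I ⊆ f ⁻¹' Iic 0 := by
      intro x hx
      rcases eq_or_ne x m₀ with rfl | hne
      · exact h
      · exact le_trans (hm₀.2 x hx hne).le h
    have hS : MeasurableSet (f ⁻¹' Iic 0) := (isClosed_Iic.preimage hf).measurableSet
    have hPS : P (f ⁻¹' Iic 0) = 0 := by
      rw [hPd, withDensity_apply _ hS]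
      have : ∀ᵐ x ∂(volume.restrict (f ⁻¹' Iic 0)), ENNReal.ofReal (f x) = 0 := by
        refine (ae_restrict_iff' hS).2 (ae_of_all _ fun x hx => ?_)
        exact ENNReal.ofReal_eq_zero.2 hx
      rw [lintegral_congr_ae this, lintegral_zero]
    have : P I = 0 := le_antisymm (hPS ▸ measure_mono hsub) (zero_le)
    rw [hPI] at this
    exact one_ne_zero this
  -- points with cdf strictly between 0 and 1 lie in I
  have hmemI : ∀ x : ℝ, 0 < cdf P x → cdf P x < 1 → x ∈ I := by
    intro x h0 h1
    by_contra hx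
    have hcases : (∀ y ∈ I, x < y) ∨ (∀ y ∈ I, y < x) := by
      by_contra h
      push_neg at h
      obtain ⟨⟨y, hy, hyx⟩, ⟨z, hz, hzx⟩⟩ := h
      exact hx (hI.out hy hz ⟨hyx, hzx⟩)
    rcases hcases with h | h
    · have hsub : I ⊆ (Iic x)ᶜ := fun y hy => not_le.2 (h y hy)
      have h1' : (1 : ℝ≥0∞) ≤ P (Iic x)ᶜ := hPI ▸ measure_mono hsub
      have hadd : P (Iic x) + P (Iic x)ᶜ = 1 := by
        rw [measure_add_measure_compl measurableSet_Iic, measure_univ]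
      have hta : cdf P x + (P (Iic x)ᶜ).toReal = 1 := by
        rw [cdf_eq_real, measureReal_def, ← ENNReal.toReal_add (measure_ne_top _ _) (measure_ne_top _ _), hadd,
          ENNReal.toReal_one]
      have htb : (1 : ℝ) ≤ (P (Iic x)ᶜ).toReal := by
        have := ENNReal.toReal_mono (measure_ne_top _ _) h1'
        simpa using this
      linarith
    · have hsub : I ⊆ Iic x := fun y hy => (h y hy).le
      have h2 : (1 : ℝ≥0∞) ≤ P (Iic x) := hPI ▸ measure_mono hsub
      have : (1 : ℝ) ≤ cdf P x := by
        rw [cdf_eq_real, measureReal_def]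
        have := ENNReal.toReal_mono (measure_ne_top _ _) h2
        simpa using this
      linarith
  -- quantile function
  set q : ℝ → ℝ := Function.invFun (fun y => cdf P y) with hqdef
  have hsurj : ∀ s : ℝ, 0 < s → s < 1 → ∃ x, cdf P x = s := by
    intro s h0 h1
    have hbot : ∀ᶠ x in atBot, cdf P x < s :=
      (tendsto_cdf_atBot P).eventually (eventually_lt_nhds h0)
    have htop : ∀ᶠ x in atTop, s < cdf P x :=
      (tendsto_cdf_atTop P).eventually (eventually_gt_nhds h1)
    obtain ⟨x₀, hx₀⟩ := hbot.exists
    obtain ⟨x₁, hx₁⟩ := htop.exists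
    have hle : x₀ ≤ x₁ := by
      by_contra h
      push_neg at h
      exact absurd (hFmono h.le) (by simp; linarith)
    obtain ⟨x, _, hx⟩ := intermediate_value_Icc hle hFc.continuousOn ⟨hx₀.le, hx₁.le⟩
    exact ⟨x, hx⟩
  have hq : ∀ s : ℝ, 0 < s → s < 1 → cdf P (q s) = s := by
    intro s h0 h1
    exact Function.invFun_eq (hsurj s h0 h1)
  have hqI : ∀ s : ℝ, 0 < s → s < 1 → q s ∈ I := by
    intro s h0 h1
    exact hmemI _ (by rw [hq s h0 h1]; exact h0) (by rw [hq s h0 h1]; exact h1)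
  -- the cdf of the reflected measure
  have hG : ∀ z : ℝ, cdf (Measure.map (fun z : ℝ => -z) P) z = 1 - cdf P (-z) := by
    intro z
    have hatom : P {(-z)} = 0 := by
      have h0 : volume.restrict {(-z)} = 0 := Measure.restrict_eq_zero.2 (by simp)
      rw [hPd, withDensity_apply _ (measurableSet_singleton _), h0, lintegral_zero_measure]
    haveI : IsProbabilityMeasure (Measure.map (fun z : ℝ => -z) P) :=
      Measure.isProbabilityMeasure_map measurable_neg.aemeasurable
    have hmap : (Measure.map (fun z : ℝ => -z) P) (Iic z) = P (Ici (-z)) := by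
      rw [Measure.map_apply measurable_neg measurableSet_Iic]
      congr 1
      ext x
      simp [neg_le]
    have hIio : P (Iio (-z)) = P (Iic (-z)) := by
      refine le_antisymm (measure_mono Iio_subset_Iic_self) ?_
      calc P (Iic (-z)) = P (Iio (-z) ∪ {(-z)}) := by rw [Iio_union_right]
      _ ≤ P (Iio (-z)) + P {(-z)} := measure_union_le _ _
      _ = P (Iio (-z)) := by rw [hatom, add_zero]
    have hIci : P (Ici (-z)) = 1 - P (Iic (-z)) := by
      rw [← compl_Iio, measure_compl measurableSet_Iio (measure_ne_top _ _), measure_univ, hIio]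
    rw [cdf_eq_real, measureReal_def, hmap, hIci, ENNReal.toReal_sub_of_le prob_le_one ENNReal.one_ne_top,
      ENNReal.toReal_one, cdf_eq_real, measureReal_def]
  -- the convex transform evaluated at quantiles
  set φ : ℝ → ℝ := fun x => Function.invFun (fun y => cdf P y)
      (cdf (Measure.map (fun z : ℝ => -z) P) x) with hφdef
  have hphi : ∀ s : ℝ, 0 < s → s < 1 → φ (-(q s)) = q (1 - s) := by
    intro s h0 h1
    show Function.invFun (fun y => cdf P y) (cdf (Measure.map (fun z : ℝ => -z) P) (-(q s)))
      = q (1 - s)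
    rw [hG, neg_neg, hq s h0 h1]
  -- the key step: the cdf at the mode is at most 1/2
  have hkey : cdf P m₀ ≤ 1 / 2 := by
    by_contra hu
    push_neg at hu
    set u := cdf P m₀ with hudef
    -- u < 1
    have hu1 : u < 1 := by
      rcases lt_or_ge u 1 with h | h
      · exact h
      have hgm : 0 < g m₀ := lt_of_lt_of_le hfpos (le_max_left _ _)
      have hcont : ∀ᶠ x in nhds m₀, g m₀ / 2 < g x :=
        hgc.continuousAt.eventually_const_lt (half_lt_self hgm)
      obtain ⟨δ, hδpos, hδ⟩ := Metric.eventually_nhds_iff.1 hcont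
      have hmono : ∀ x ∈ Set.Ioc m₀ (m₀ + δ / 2), g m₀ / 2 ≤ g x := by
        intro x hx
        refine (hδ ?_).le
        rw [Real.dist_eq, abs_lt]
        constructor <;> [linarith [hx.1]; linarith [hx.2, hδpos]]
      have hint : IntegrableOn g (Set.Ioc m₀ (m₀ + δ / 2)) volume := hgc.integrableOn_Ioc
      have hlow : g m₀ / 2 * (δ / 2) ≤ ∫ x in Set.Ioc m₀ (m₀ + δ / 2), g x := by
        have := setIntegral_mono_on (integrableOn_const (by simp))
          hint measurableSet_Ioc hmono
        rw [setIntegral_const, measureReal_def, Real.volume_Ioc, smul_eq_mul] at this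
        calc g m₀ / 2 * (δ / 2) = (m₀ + δ / 2 - m₀) * (g m₀ / 2) := by ring
        _ = (ENNReal.ofReal (m₀ + δ / 2 - m₀)).toReal * (g m₀ / 2) := by
            rw [ENNReal.toReal_ofReal (by linarith)]
        _ ≤ _ := this
      have hdiff := hmass m₀ (m₀ + δ / 2) (by linarith)
      have hle1 : cdf P (m₀ + δ / 2) ≤ 1 := cdf_le_one P _
      have : (0 : ℝ) < g m₀ / 2 * (δ / 2) := by positivity
      linarith
    have hu0 : (0 : ℝ) < u := by linarith
    -- the conjugate point y₀
    have h1u0 : (0 : ℝ) < 1 - u := by linarith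
    have h1u1 : 1 - u < 1 := by linarith
    set y₀ := q (1 - u) with hy₀def
    have hy₀I : y₀ ∈ I := hqI _ h1u0 h1u1
    have hFy₀ : cdf P y₀ = 1 - u := hq _ h1u0 h1u1
    have hy₀ne : y₀ ≠ m₀ := by
      intro h
      rw [h] at hFy₀
      rw [← hudef] at hFy₀
      linarith
    have hfy : f y₀ < f m₀ := hm₀.2 y₀ hy₀I hy₀ne
    have hgy : g y₀ < f m₀ := max_lt hfy hfpos
    set ε := (f m₀ - g y₀) / 3 with hεdef
    have hεpos : 0 < ε := by rw [hεdef]; linarith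
    -- continuity windows
    have hgm₀ : g m₀ = f m₀ := max_eq_left hfpos.le
    have hcont1 : ∀ᶠ x in nhds m₀, f m₀ - ε < g x := by
      have := hgc.continuousAt.eventually_const_lt (show g m₀ - ε < g m₀ by linarith)
      simpa [hgm₀] using this
    have hcont2 : ∀ᶠ x in nhds y₀, g x < g y₀ + ε :=
      hgc.continuousAt.eventually_lt_const (by linarith)
    obtain ⟨δ₁, hδ₁pos, hδ₁⟩ := Metric.eventually_nhds_iff.1 hcont1
    obtain ⟨δ₂, hδ₂pos, hδ₂⟩ := Metric.eventually_nhds_iff.1 hcont2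
    set δ := min δ₁ δ₂ with hδdef
    have hδpos : 0 < δ := lt_min hδ₁pos hδ₂pos
    -- the median-side point
    have hhalf0 : (0 : ℝ) < 1 / 2 := by norm_num
    have hhalf1 : (1 : ℝ) / 2 < 1 := by norm_num
    set mh := q (1 / 2) with hmhdef
    have hmhI : mh ∈ I := hqI _ hhalf0 hhalf1
    have hFmh : cdf P mh = 1 / 2 := hq _ hhalf0 hhalf1
    have hmhlt : mh < m₀ := by
      by_contra h
      push_neg at h
      have := hFmono h
      simp only at this
      rw [hFmh] at this
      rw [← hudef] at this
      linarith
    set a := max (m₀ - δ / 2) ((mh + m₀) / 2) with hadef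
    have ha1 : a < m₀ := max_lt (by linarith) (by linarith)
    have ha2 : mh < a := lt_of_lt_of_le (by linarith) (le_max_right _ _)
    have ha3 : m₀ - a ≤ δ / 2 := by
      have := le_max_left (m₀ - δ / 2) ((mh + m₀) / 2)
      linarith
    have haI : a ∈ I := hI.out hmhI hm₀.1 ⟨ha2.le, ha1.le⟩
    set t := cdf P a with htdef
    have ht2 : 1 / 2 < t := by
      have := hF hmhI haI ha2
      simp only at this
      rw [hFmh] at this
      exact this
    have htu : t < u := hF haI hm₀.1 ha1
    have ht0 : (0 : ℝ) < t := by linarith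
    have ht1 : t < 1 := by linarith
    have h1t0 : (0 : ℝ) < 1 - t := by linarith
    have h1t1 : 1 - t < 1 := by linarith
    -- q t = a, q u = m₀
    have hqt : q t = a := hF.injOn (hqI _ ht0 ht1) haI (by rw [hq _ ht0 ht1])
    have hqu : q u = m₀ := hF.injOn (hqI _ hu0 hu1) hm₀.1 (by rw [hq _ hu0 hu1])
    set b := q (1 - t) with hbdef
    have hbI : b ∈ I := hqI _ h1t0 h1t1
    have hFb : cdf P b = 1 - t := hq _ h1t0 h1t1
    have hyb : y₀ < b := by
      by_contra h
      push_neg at h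
      have := hFmono h
      simp only at this
      rw [hFb, hFy₀] at this
      linarith
    have hba : b < a := by
      by_contra h
      push_neg at h
      have := hFmono h
      simp only at this
      rw [hFb, ← htdef] at this
      linarith
    -- φ values at the four points
    have hφ1 : φ (-m₀) = y₀ := by
      have := hphi u hu0 hu1
      rw [hqu] at this
      exact this
    have hφ2 : φ (-a) = b := by
      have := hphi t ht0 ht1
      rw [hqt] at this
      exact this
    have hφ3 : φ (-b) = a := by
      have := hphi (1 - t) h1t0 h1t1
      rw [← hbdef, show (1 : ℝ) - (1 - t) = t by ring, hqt] at this
      exact this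
    have hφ4 : φ (-y₀) = m₀ := by
      have := hphi (1 - u) h1u0 h1u1
      rw [← hy₀def, show (1 : ℝ) - (1 - u) = u by ring, hqu] at this
      exact this
    -- membership in the reflected set
    have hSm₀ : -m₀ ∈ (fun x => -x) '' I := ⟨m₀, hm₀.1, rfl⟩
    have hSa : -a ∈ (fun x => -x) '' I := ⟨a, haI, rfl⟩
    have hSb : -b ∈ (fun x => -x) '' I := ⟨b, hbI, rfl⟩
    have hSy₀ : -y₀ ∈ (fun x => -x) '' I := ⟨y₀, hy₀I, rfl⟩
    clear_value g q φ u y₀ ε δ mh a t b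
    -- convexity slope inequalities
    have hs1 := hskew.slope_mono_adjacent (y := -a) hSm₀ hSb (by linarith) (by linarith)
    have hs2 := hskew.slope_mono_adjacent (y := -b) hSa hSy₀ (by linarith) (by linarith)
    rw [hφ1, hφ2, hφ3] at hs1
    rw [hφ2, hφ3, hφ4] at hs2
    have hd1 : (0 : ℝ) < m₀ - a := by linarith
    have hd2 : (0 : ℝ) < b - y₀ := by linarith
    have hd3 : (0 : ℝ) < a - b := by linarith
    have hchain : (b - y₀) / (m₀ - a) ≤ (m₀ - a) / (b - y₀) := by
      have e1 : -a - -m₀ = m₀ - a := by ring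
      have e2 : -b - -a = a - b := by ring
      have e3 : -y₀ - -b = b - y₀ := by ring
      rw [e1, e2] at hs1
      rw [e2, e3] at hs2
      exact le_trans hs1 hs2
    have hlen : b - y₀ ≤ m₀ - a := by
      rw [div_le_div_iff₀ hd1 hd2] at hchain
      by_contra h
      push_neg at h
      exact absurd hchain (not_le.2 (mul_lt_mul'' h h hd1.le hd1.le))
    -- mass comparison
    have hmass1 : u - t = ∫ x in Set.Ioc a m₀, g x := by
      have := hmass a m₀ ha1.le
      rw [← hudef, ← htdef] at this
      exact this
    have hmass2 : u - t = ∫ x in Set.Ioc y₀ b, g x := by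
      have := hmass y₀ b hyb.le
      rw [hFb, hFy₀] at this
      linarith [this]
    have hlow : (f m₀ - ε) * (m₀ - a) ≤ u - t := by
      rw [hmass1]
      have hmono : ∀ x ∈ Set.Ioc a m₀, f m₀ - ε ≤ g x := by
        intro x hx
        refine (hδ₁ ?_).le
        rw [Real.dist_eq, abs_lt]
        have hδle : δ ≤ δ₁ := by rw [hδdef]; exact min_le_left _ _
        constructor <;> linarith [hx.1, hx.2, ha3, hδle, hδ₁pos, hδpos]
      have := setIntegral_mono_on
        (integrableOn_const (show volume (Set.Ioc a m₀) < ⊤ from measure_Ioc_lt_top).ne)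
        hgc.integrableOn_Ioc measurableSet_Ioc hmono
      rw [setIntegral_const, measureReal_def, Real.volume_Ioc, smul_eq_mul,
        ENNReal.toReal_ofReal (by linarith)] at this
      calc (f m₀ - ε) * (m₀ - a) = (m₀ - a) * (f m₀ - ε) := by ring
      _ ≤ _ := this
    have hhigh : u - t ≤ (g y₀ + ε) * (b - y₀) := by
      rw [hmass2]
      have hmono : ∀ x ∈ Set.Ioc y₀ b, g x ≤ g y₀ + ε := by
        intro x hx
        refine (hδ₂ ?_).le
        rw [Real.dist_eq, abs_lt]
        have hδle : δ ≤ δ₂ := by rw [hδdef]; exact min_le_right _ _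
        constructor <;> linarith [hx.1, hx.2, hlen, ha3, hδle, hδ₂pos, hδpos]
      have := setIntegral_mono_on hgc.integrableOn_Ioc
        (integrableOn_const (show volume (Set.Ioc y₀ b) < ⊤ from measure_Ioc_lt_top).ne)
        measurableSet_Ioc hmono
      rw [setIntegral_const, measureReal_def, Real.volume_Ioc, smul_eq_mul,
        ENNReal.toReal_ofReal (by linarith)] at this
      calc _ ≤ (b - y₀) * (g y₀ + ε) := this
      _ = (g y₀ + ε) * (b - y₀) := by ring
    have hfinal : (f m₀ - ε) * (m₀ - a) ≤ (g y₀ + ε) * (m₀ - a) := by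
      have hnng : (0 : ℝ) ≤ g y₀ + ε := by linarith [hgnn y₀]
      calc (f m₀ - ε) * (m₀ - a) ≤ (g y₀ + ε) * (b - y₀) := le_trans hlow hhigh
      _ ≤ (g y₀ + ε) * (m₀ - a) := mul_le_mul_of_nonneg_left hlen hnng
    have : f m₀ - ε ≤ g y₀ + ε := le_of_mul_le_mul_right
      (by calc (f m₀ - ε) * (m₀ - a) ≤ _ := hfinal) hd1
    rw [hεdef] at this
    linarith
  -- now construct the median
  have htop : ∀ᶠ x in atTop, 1 / 2 ≤ cdf P x ∧ m₀ ≤ x :=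
    ((tendsto_cdf_atTop P).eventually (eventually_ge_nhds (by norm_num : (1:ℝ)/2 < 1))).and
      (eventually_ge_atTop m₀)
  obtain ⟨x₁, hx₁⟩ := htop.exists
  obtain ⟨m₁, hm₁mem, hm₁⟩ :=
    intermediate_value_Icc hx₁.2 hFc.continuousOn (⟨hkey, hx₁.1⟩ : (1:ℝ)/2 ∈ Icc (cdf P m₀) (cdf P x₁))
  have hm₁' : cdf P m₁ = 1 / 2 := hm₁
  have hIic : P (Set.Iic m₁) = 1 / 2 := by
    rw [← ofReal_cdf P m₁, hm₁']
    rw [show (1 : ℝ) / 2 = (2 : ℝ)⁻¹ by norm_num, ENNReal.ofReal_inv_of_pos two_pos,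
      ENNReal.ofReal_ofNat]
    norm_num
  refine ⟨m₁, le_of_eq hIic.symm, ?_, hm₁mem.1⟩
  have hIci : P (Set.Ici m₁) = 1 - P (Set.Iio m₁) := by
    rw [← compl_Iio, measure_compl measurableSet_Iio (measure_ne_top _ _), measure_univ]
  rw [hIci]
  calc (1 : ℝ≥0∞) / 2 = 1 - 1 / 2 := by
        rw [← ENNReal.sub_half ENNReal.one_ne_top]
        norm_num
  _ ≤ 1 - P (Set.Iio m₁) := by
      refine tsub_le_tsub_left ?_ 1
      rw [← hIic]
      exact measure_mono Iio_subset_Iic_self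
end

section
/- Let P be a positively skewed probability distribution with finite mean m₂ and continuous strictly increasing CDF on its supporting interval. Then there exists a median m₁ of P with m₁ ≤ m₂. -/
open MeasureTheory ProbabilityTheory Set

/-- Theorem 14 (median–mean): a positively skewed distribution with finite mean
has a median at most as large as its mean. -/
theorem median_le_mean_of_positively_skewed
    (P : Measure ℝ) [IsProbabilityMeasure P]
    (I : Set ℝ) (hI : I.OrdConnected) (hPI : P I = 1)
    (hFc : Continuous (fun x => cdf P x))
    (hF : StrictMonoOn (fun x => cdf P x) I)
    -- finite mean:
    (hint : Integrable id P)
    -- positive skewness: `-X ≤_c X`: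
    (hskew : ConvexOn ℝ ((fun x => -x) '' I)
      (fun x => Function.invFun (fun y => cdf P y)
        (cdf (Measure.map (fun z => -z) P) x))) :
    ∃ m₁ : ℝ, P (Set.Iic m₁) ≥ 1 / 2 ∧ P (Set.Ici m₁) ≥ 1 / 2 ∧ m₁ ≤ ∫ x, x ∂P := by
  classical
  set F : ℝ → ℝ := fun x => cdf P x with hFdef
  have hFmono : Monotone F := monotone_cdf P
  have hF0 : ∀ x, 0 ≤ F x := fun x => cdf_nonneg P x
  have hF1 : ∀ x, F x ≤ 1 := fun x => cdf_le_one P x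
  have hIic : ∀ x, P (Iic x) = ENNReal.ofReal (F x) := fun x => (ofReal_cdf P x).symm
  -- no atoms
  have hatom : ∀ x : ℝ, P {x} = 0 := by
    intro x
    have h1 : P = (cdf P).measure := (measure_cdf P).symm
    have h2 : (cdf P).measure {x} = ENNReal.ofReal (cdf P x - Function.leftLim (cdf P) x) :=
      StieltjesFunction.measure_singleton _ x
    have h3 : Function.leftLim (fun y => cdf P y) x = cdf P x := by
      exact leftLim_eq_of_tendsto
        ((hFc.tendsto x).mono_left nhdsWithin_le_nhds)
    rw [h1, h2]
    have : Function.leftLim (cdf P) x = cdf P x := h3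
    rw [this, sub_self, ENNReal.ofReal_zero]
  have hIio : ∀ x, P (Iio x) = ENNReal.ofReal (F x) := by
    intro x
    have : P (Iic x) = P (Iio x) + P {x} := by
      rw [← Set.Iio_union_right, measure_union (by simp) (measurableSet_singleton x)]
    rw [hatom, add_zero] at this
    rw [← this, hIic]
  have hIci : ∀ x, P (Ici x) = ENNReal.ofReal (1 - F x) := by
    intro x
    have hc : P (Ici x) = 1 - P (Iio x) := by
      rw [← Set.compl_Iio, measure_compl measurableSet_Iio (measure_ne_top P _), measure_univ]
    rw [hc, hIio]
    rw [ENNReal.ofReal_sub _ (hF0 x), ENNReal.ofReal_one]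
  have hIoi : ∀ x, P (Ioi x) = ENNReal.ofReal (1 - F x) := by
    intro x
    have : P (Ici x) = P (Ioi x) + P {x} := by
      rw [← Set.Ioi_union_left, measure_union (by simp) (measurableSet_singleton x)]
    rw [hatom, add_zero] at this
    rw [← this, hIci]
  have hIc : P Iᶜ = 0 := by
    rw [measure_compl hI.measurableSet (measure_ne_top P _), measure_univ, hPI, tsub_self]
  -- surjectivity onto (0,1), landing in I
  have hsurj : ∀ u : ℝ, 0 < u → u < 1 → ∃ q ∈ I, F q = u := by
    intro u hu0 hu1
    obtain ⟨a, ha⟩ : ∃ a, F a < u := by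
      have := (tendsto_cdf_atBot P).eventually (eventually_lt_nhds hu0)
      exact this.exists
    obtain ⟨b, hb⟩ : ∃ b, u < F b := by
      have := (tendsto_cdf_atTop P).eventually (eventually_gt_nhds hu1)
      exact this.exists
    have hab : a ≤ b := by
      by_contra h
      exact absurd (hFmono (le_of_not_ge h)) (not_le.mpr (lt_trans ha hb))
    obtain ⟨q, _, hq⟩ : ∃ q ∈ Icc a b, F q = u := by
      have := intermediate_value_Icc hab (hFc.continuousOn (s := Icc a b))
      exact this ⟨le_of_lt ha, le_of_lt hb⟩
    refine ⟨q, ?_, hq⟩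
    obtain ⟨p₁, hp₁, hp₁q⟩ : ∃ p ∈ I, p ≤ q := by
      by_contra h
      push_neg at h
      have hsub : I ⊆ Ioi q := fun p hp => h p hp
      have : (1 : ENNReal) ≤ P (Ioi q) := hPI ▸ measure_mono hsub
      rw [hIoi, hq] at this
      have : (1:ℝ) ≤ 1 - u := by
        have h2 := ENNReal.toReal_mono (by simp) this
        simpa [ENNReal.toReal_ofReal (by linarith : (0:ℝ) ≤ 1 - u)] using h2
      linarith
    obtain ⟨p₂, hp₂, hqp₂⟩ : ∃ p ∈ I, q ≤ p := by
      by_contra h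
      push_neg at h
      have hsub : I ⊆ Iio q := fun p hp => h p hp
      have : (1 : ENNReal) ≤ P (Iio q) := hPI ▸ measure_mono hsub
      rw [hIio, hq] at this
      have : (1:ℝ) ≤ u := by
        have h2 := ENNReal.toReal_mono (by simp) this
        simpa [ENNReal.toReal_ofReal (le_of_lt hu0)] using h2
      linarith
    exact hI.out hp₁ hp₂ ⟨hp₁q, hqp₂⟩
  -- level sets are null
  have hlevel : ∀ u : ℝ, P {x | F x = u} = 0 := by
    intro u
    have hsub : {x | F x = u} ⊆ ({x | F x = u} ∩ I) ∪ Iᶜ := by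
      intro x hx
      by_cases h : x ∈ I
      · exact Or.inl ⟨hx, h⟩
      · exact Or.inr h
    have hsing : ({x | F x = u} ∩ I).Subsingleton := by
      intro x hx y hy
      exact hF.injOn hx.2 hy.2 (hx.1.trans hy.1.symm)
    have h0 : P ({x | F x = u} ∩ I) = 0 := by
      rcases hsing.eq_empty_or_singleton with h | ⟨a, h⟩
      · rw [h]; exact measure_empty
      · rw [h]; exact hatom a
    refine le_antisymm ?_ (zero_le)
    calc P {x | F x = u} ≤ P (({x | F x = u} ∩ I) ∪ Iᶜ) := measure_mono hsub
      _ ≤ P ({x | F x = u} ∩ I) + P Iᶜ := measure_union_le _ _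
      _ = 0 := by rw [h0, hIc, add_zero]
  -- the convex transform
  set k : ℝ → ℝ := fun x => Function.invFun (fun y => cdf P y)
      (cdf (Measure.map (fun z : ℝ => -z) P) x) with hkdef
  haveI : IsProbabilityMeasure (Measure.map (fun z : ℝ => -z) P) :=
    Measure.isProbabilityMeasure_map measurable_neg.aemeasurable
  have hneg : ∀ x : ℝ, cdf (Measure.map (fun z : ℝ => -z) P) (-x) = 1 - F x := by
    intro x
    rw [cdf_eq_real, measureReal_def]
    rw [Measure.map_apply measurable_neg measurableSet_Iic]
    have : (fun z : ℝ => -z) ⁻¹' Iic (-x) = Ici x := by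
      ext z; simp
    rw [this, hIci, ENNReal.toReal_ofReal (by linarith [hF1 x])]
  set ψ : ℝ → ℝ := fun x => k (-x) with hψdef
  have hψF : ∀ x : ℝ, 0 < F x → F x < 1 → F (ψ x) = 1 - F x := by
    intro x h0 h1
    obtain ⟨q, _, hq⟩ := hsurj (1 - F x) (by linarith) (by linarith)
    have : ψ x = Function.invFun (fun y => cdf P y) (1 - F x) := by
      simp only [hψdef, hkdef, hneg x]
    rw [this]
    exact Function.invFun_eq ⟨q, hq⟩
  -- the good set S
  set S : Set ℝ := I ∩ {x | 0 < F x ∧ F x < 1} with hSdef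
  have hS1 : P Sᶜ = 0 := by
    have hsub : Sᶜ ⊆ Iᶜ ∪ ({x | F x = 0} ∪ {x | F x = 1}) := by
      intro x hx
      simp only [hSdef, Set.mem_compl_iff, Set.mem_inter_iff, Set.mem_setOf_eq, not_and,
        not_and_or, not_lt] at hx
      by_cases hxI : x ∈ I
      · by_cases h0 : 0 < F x
        · exact Or.inr (Or.inr (le_antisymm (hF1 x) (hx hxI h0)))
        · exact Or.inr (Or.inl (le_antisymm (not_lt.mp h0) (hF0 x)))
      · exact Or.inl hxI
    refine le_antisymm ?_ (zero_le)
    calc P Sᶜ ≤ P Iᶜ + (P {x | F x = 0} + P {x | F x = 1}) :=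
          le_trans (measure_mono hsub) (le_trans (measure_union_le _ _)
            (add_le_add le_rfl (measure_union_le _ _)))
      _ = 0 := by rw [hIc, hlevel 0, hlevel 1]; simp
  have haeS : ∀ᵐ x ∂P, x ∈ S := by
    rw [MeasureTheory.ae_iff]
    exact hS1
  -- points of I on both sides
  have hside : ∀ x : ℝ, 0 < F x → F x < 1 →
      (∃ a ∈ I, a < x) ∧ (∃ b ∈ I, x < b) := by
    intro x h0 h1
    obtain ⟨a, haI, ha⟩ := hsurj (F x / 2) (by linarith) (by linarith)
    obtain ⟨b, hbI, hb⟩ := hsurj ((F x + 1) / 2) (by linarith) (by linarith)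
    refine ⟨⟨a, haI, ?_⟩, ⟨b, hbI, ?_⟩⟩
    · by_contra h
      exact absurd (hFmono (le_of_not_gt h)) (by rw [ha]; linarith)
    · by_contra h
      exact absurd (hFmono (le_of_not_gt h)) (by rw [hb]; linarith)
  -- measurability of ψ
  have hconv : ConvexOn ℝ ((fun x : ℝ => -x) '' I) k := hskew
  have hkc : ContinuousOn k (interior ((fun x : ℝ => -x) '' I)) := hconv.continuousOn_interior
  set T : Set ℝ := (fun x : ℝ => -x) ⁻¹' (interior ((fun x : ℝ => -x) '' I)) with hTdef
  have hTopen : IsOpen T := isOpen_interior.preimage continuous_neg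
  have hST : S ⊆ T := by
    rintro x ⟨hxI, h0, h1⟩
    obtain ⟨⟨a, haI, hax⟩, ⟨b, hbI, hxb⟩⟩ := hside x h0 h1
    have hIoo : Ioo (-b) (-a) ⊆ (fun x : ℝ => -x) '' I := by
      intro y hy
      exact ⟨-y, hI.out haI hbI ⟨by linarith [hy.2], by linarith [hy.1]⟩, by ring⟩
    have : -x ∈ interior ((fun x : ℝ => -x) '' I) :=
      interior_maximal hIoo isOpen_Ioo ⟨by linarith, by linarith⟩
    exact this
  have hPT : ∀ᵐ x ∂P, x ∈ T := haeS.mono (fun x hx => hST hx)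
  have hψc : ContinuousOn ψ T :=
    hkc.comp continuous_neg.continuousOn (fun y hy => hy)
  have hψm : AEMeasurable ψ P := by
    have := (hψc.aemeasurable hTopen.measurableSet :
      AEMeasurable ψ (P.restrict T))
    rwa [Measure.restrict_eq_self_of_ae_mem hPT] at this
  -- ψ pushes P forward to P
  have hmap : Measure.map ψ P = P := by
    haveI : IsProbabilityMeasure (Measure.map ψ P) := Measure.isProbabilityMeasure_map hψm
    refine Measure.ext_of_Iic _ _ (fun t => ?_)
    rw [Measure.map_apply_of_aemeasurable hψm measurableSet_Iic, hIic]
    set u : ℝ := 1 - F t with hudef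
    -- upper bound
    have hub : P (ψ ⁻¹' Iic t) ≤ ENNReal.ofReal (F t) := by
      by_cases ht1 : F t = 1
      · calc P (ψ ⁻¹' Iic t) ≤ 1 := prob_le_one
          _ = ENNReal.ofReal (F t) := by rw [ht1]; simp
      have hu0 : 0 < u := by
        have := hF1 t; rw [hudef]; cases lt_or_eq_of_le this with
        | inl h => linarith
        | inr h => exact absurd h ht1
      have hsub : ψ ⁻¹' Iic t ⊆ Sᶜ ∪ {x | u ≤ F x} := by
        intro x hx
        by_cases hxS : x ∈ S
        · refine Or.inr ?_
          have h1 : F (ψ x) = 1 - F x := hψF x hxS.2.1 hxS.2.2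
          have h2 : F (ψ x) ≤ F t := hFmono hx
          simp only [Set.mem_setOf_eq, hudef]
          linarith [h1 ▸ h2]
        · exact Or.inl hxS
      have hub2 : P {x | u ≤ F x} ≤ ENNReal.ofReal (F t) := by
        by_cases hu1 : u < 1
        · obtain ⟨q, hqI, hq⟩ := hsurj u hu0 hu1
          have hsub2 : {x | u ≤ F x} ⊆ Ici q ∪ {x | F x = u} := by
            intro x hx
            by_cases hxq : q ≤ x
            · exact Or.inl hxq
            · refine Or.inr (le_antisymm ?_ hx)
              calc F x ≤ F q := hFmono (le_of_not_ge hxq)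
                _ = u := hq
          calc P {x | u ≤ F x} ≤ P (Ici q) + P {x | F x = u} :=
                le_trans (measure_mono hsub2) (measure_union_le _ _)
            _ = ENNReal.ofReal (F t) := by
                rw [hlevel u, add_zero, hIci, hq, hudef]; ring_nf
        · have : {x | u ≤ F x} ⊆ {x | F x = 1} := by
            intro x hx
            exact le_antisymm (hF1 x) (le_trans (le_of_not_gt hu1) hx)
          calc P {x | u ≤ F x} ≤ P {x | F x = 1} := measure_mono this
            _ = 0 := hlevel 1
            _ ≤ ENNReal.ofReal (F t) := zero_le
      calc P (ψ ⁻¹' Iic t) ≤ P Sᶜ + P {x | u ≤ F x} :=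
            le_trans (measure_mono hsub) (measure_union_le _ _)
        _ ≤ ENNReal.ofReal (F t) := by rw [hS1, zero_add]; exact hub2
    -- lower bound
    have hlb : ENNReal.ofReal (F t) ≤ P (ψ ⁻¹' Iic t) := by
      by_cases ht0 : F t ≤ 0
      · calc ENNReal.ofReal (F t) = 0 := by simpa using ht0
          _ ≤ _ := zero_le
      push_neg at ht0
      have hu1 : u < 1 := by rw [hudef]; linarith
      have hsub : S ∩ {x | u < F x} ⊆ ψ ⁻¹' Iic t := by
        rintro x ⟨hxS, hx⟩
        have h1 : F (ψ x) = 1 - F x := hψF x hxS.2.1 hxS.2.2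
        have h2 : F (ψ x) < F t := by
          rw [h1]; simp only [Set.mem_setOf_eq, hudef] at hx; linarith
        by_contra h
        exact absurd (hFmono (le_of_not_ge (fun hc => h (Set.mem_preimage.mpr hc))))
          (not_le.mpr h2)
      have hlb2 : ENNReal.ofReal (F t) ≤ P {x | u < F x} := by
        by_cases hu0 : 0 < u
        · obtain ⟨q, hqI, hq⟩ := hsurj u hu0 hu1
          have hsub2 : Ioi q ⊆ {x | u < F x} ∪ {x | F x = u} := by
            intro x hx
            have : F q ≤ F x := hFmono (le_of_lt hx)
            rw [hq] at this
            rcases lt_or_eq_of_le this with h | h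
            · exact Or.inl h
            · exact Or.inr h.symm
          have : ENNReal.ofReal (F t) = P (Ioi q) := by
            rw [hIoi, hq, hudef]; ring_nf
          rw [this]
          calc P (Ioi q) ≤ P {x | u < F x} + P {x | F x = u} :=
                le_trans (measure_mono hsub2) (measure_union_le _ _)
            _ = P {x | u < F x} := by rw [hlevel u, add_zero]
        · -- u ≤ 0 : F t = 1 case basically
          push_neg at hu0
          have hone : (1 : ENNReal) ≤ P {x | u < F x} + P {x | F x = 0} := by
            have huniv : (Set.univ : Set ℝ) ⊆ {x | u < F x} ∪ {x | F x = 0} := by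
              intro x _
              rcases lt_or_ge u (F x) with h | h
              · exact Or.inl h
              · exact Or.inr (le_antisymm (le_trans h hu0) (hF0 x))
            calc (1 : ENNReal) = P Set.univ := (measure_univ).symm
              _ ≤ _ := le_trans (measure_mono huniv) (measure_union_le _ _)
          rw [hlevel 0, add_zero] at hone
          calc ENNReal.ofReal (F t) ≤ 1 := by
                simpa using ENNReal.ofReal_le_ofReal (hF1 t)
            _ ≤ P {x | u < F x} := hone
      have hlb3 : P {x | u < F x} ≤ P (S ∩ {x | u < F x}) + P Sᶜ := by
        refine le_trans (measure_mono ?_) (measure_union_le _ _)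
        intro x hx
        by_cases hxS : x ∈ S
        · exact Or.inl ⟨hxS, hx⟩
        · exact Or.inr hxS
      calc ENNReal.ofReal (F t) ≤ P {x | u < F x} := hlb2
        _ ≤ P (S ∩ {x | u < F x}) + P Sᶜ := hlb3
        _ = P (S ∩ {x | u < F x}) := by rw [hS1, add_zero]
        _ ≤ P (ψ ⁻¹' Iic t) := measure_mono hsub
    exact le_antisymm hub hlb
  -- integrability and integral identity for ψ
  have hψint : Integrable ψ P := by
    have h := (integrable_map_measure aestronglyMeasurable_id hψm).mp
    rw [hmap] at h
    simpa [Function.comp] using h hint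
  have hψeq : ∫ x, ψ x ∂P = ∫ x, x ∂P := by
    have h := integral_map hψm (aestronglyMeasurable_id (μ := Measure.map ψ P) (α := ℝ))
    rw [hmap] at h
    simpa [Function.comp] using h.symm
  -- the median
  obtain ⟨m, hmI, hm⟩ := hsurj (1/2) (by norm_num) (by norm_num)
  have hhalf : ENNReal.ofReal (1/2 : ℝ) = 1/2 := by
    rw [ENNReal.ofReal_div_of_pos (by norm_num)]; norm_num
  have hIicm : P (Iic m) = 1/2 := by rw [hIic, hm, hhalf]
  have hIcim : P (Ici m) = 1/2 := by
    rw [hIci, hm, show (1:ℝ) - 1/2 = 1/2 by norm_num, hhalf]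
  refine ⟨m, le_of_eq hIicm.symm, le_of_eq hIcim.symm, ?_⟩
  set μm : ℝ := ∫ x, x ∂P with hμdef
  by_contra hmle
  push_neg at hmle
  -- F μm > 0
  have hIcimR : (P (Ici m)).toReal = 1/2 := by
    rw [hIcim]; simp [ENNReal.toReal_div]
  have hFμpos : 0 < F μm := by
    rcases (hF0 μm).lt_or_eq with h | h
    · exact h
    · exfalso
      have hPI0 : P (Iic μm) = 0 := by rw [hIic, ← h]; simp
      have hae : ∀ᵐ x ∂P, μm ≤ x := by
        have h2 : ∀ᵐ x ∂P, x ∉ Iic μm := by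
          rw [MeasureTheory.ae_iff]
          simp only [not_not]; exact hPI0
        exact h2.mono (fun x hx => le_of_lt (not_le.mp hx))
      have hgint : Integrable (fun x => x - μm) P := hint.sub (integrable_const μm)
      have hindint : Integrable ((Ici m).indicator (fun _ => m - μm)) P :=
        (integrable_const (m - μm)).indicator measurableSet_Ici
      have hptle : ∀ᵐ x ∂P, (Ici m).indicator (fun _ => m - μm) x ≤ x - μm := by
        refine hae.mono (fun x hx => ?_)
        by_cases hxm : x ∈ Ici m
        · rw [Set.indicator_of_mem hxm]
          have : m ≤ x := hxm
          linarith
        · rw [Set.indicator_of_notMem hxm]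
          linarith
      have h1 := integral_mono_ae hindint hgint hptle
      rw [integral_indicator_const _ measurableSet_Ici] at h1
      have hsubeq : ∫ a, (a - μm) ∂P = 0 := by
        have h2 := integral_sub hint (integrable_const μm)
        simp only [id_eq, integral_const, measure_univ, ENNReal.toReal_one, probReal_univ, one_smul,
          smul_eq_mul] at h2
        rw [h2, ← hμdef]; ring
      rw [hsubeq, measureReal_def, hIcimR] at h1
      simp only [smul_eq_mul] at h1
      nlinarith
  have hFμle : F μm ≤ F m := hFmono (le_of_lt hmle)
  have hFμlt1 : F μm < 1 := by rw [hm] at hFμle; linarith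
  -- μm ∈ I
  obtain ⟨⟨a, haI, haμ⟩, ⟨b, hbI, hμb⟩⟩ := hside μm hFμpos hFμlt1
  have hμI : μm ∈ I := hI.out haI hbI ⟨le_of_lt haμ, le_of_lt hμb⟩
  have hFμhalf : F μm < 1/2 := by
    have := hF hμI hmI hmle
    rwa [hm] at this
  -- supporting line for k at -μm
  set Im : Set ℝ := (fun x : ℝ => -x) '' I with hImdef
  have hμIm : -μm ∈ Im := ⟨μm, hμI, rfl⟩
  have hbIm : -b ∈ Im := ⟨b, hbI, rfl⟩
  have haIm : -a ∈ Im := ⟨a, haI, rfl⟩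
  set T' : Set ℝ := (fun y => (k (-μm) - k y) / (-μm - y)) '' {y ∈ Im | y < -μm} with hT'def
  have hne : T'.Nonempty := ⟨_, ⟨-b, ⟨hbIm, by linarith⟩, rfl⟩⟩
  have hub : ∀ z ∈ Im, -μm < z → ∀ s ∈ T', s ≤ (k z - k (-μm)) / (z - (-μm)) := by
    rintro z hz hmz s ⟨y, ⟨hyIm, hy⟩, rfl⟩
    exact hconv.slope_mono_adjacent hyIm hz hy hmz
  have hbdd : BddAbove T' := ⟨_, hub (-a) haIm (by linarith)⟩
  set c : ℝ := sSup T' with hcdef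
  have hsupp : ∀ y ∈ Im, k (-μm) + c * (y - (-μm)) ≤ k y := by
    intro y hy
    rcases lt_trichotomy y (-μm) with h | h | h
    · have h1 : (k (-μm) - k y) / (-μm - y) ≤ c := le_csSup hbdd ⟨y, ⟨hy, h⟩, rfl⟩
      have hpos : 0 < -μm - y := by linarith
      rw [div_le_iff₀ hpos] at h1
      nlinarith
    · rw [h]; simp
    · have h1 : c ≤ (k y - k (-μm)) / (y - (-μm)) := csSup_le hne (hub y hy h)
      have hpos : 0 < y - (-μm) := by linarith
      rw [le_div_iff₀ hpos] at h1
      nlinarith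
  have haeI : ∀ᵐ x ∂P, x ∈ I := haeS.mono (fun x hx => hx.1)
  have haelin : ∀ᵐ x ∂P, k (-μm) + c * (μm - x) ≤ ψ x := by
    refine haeI.mono (fun x hx => ?_)
    have := hsupp (-x) ⟨x, hx, rfl⟩
    have heq : -x - (-μm) = μm - x := by ring
    rw [heq] at this
    exact this
  have hlinint : Integrable (fun x => k (-μm) + c * (μm - x)) P := by
    have h1 : Integrable (fun x : ℝ => μm - x) P := (integrable_const μm).sub hint
    exact (integrable_const (k (-μm))).add (h1.const_mul c)
  have hmono := integral_mono_ae hlinint hψint haelin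
  have hlinval : ∫ x, (k (-μm) + c * (μm - x)) ∂P = k (-μm) := by
    have e : (fun x : ℝ => k (-μm) + c * (μm - x))
        = fun x : ℝ => (k (-μm) + c * μm) + (-c) * x := by funext x; ring
    have hci : Integrable (fun x : ℝ => -c * x) P := hint.const_mul (-c)
    rw [e, integral_add (integrable_const _) hci, integral_const_mul, integral_const]
    have hmean : ∫ x, (x : ℝ) ∂P = μm := hμdef.symm
    simp only [id_eq, measure_univ, ENNReal.toReal_one, probReal_univ, one_smul, smul_eq_mul]
    rw [hmean]
    ring
  rw [hlinval, hψeq] at hmono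
  -- conclude
  have hψμle : ψ μm ≤ μm := hmono
  have h1 : F (ψ μm) = 1 - F μm := hψF μm hFμpos hFμlt1
  have h2 : F (ψ μm) ≤ F μm := hFmono hψμle
  rw [h1] at h2
  linarith
end

section
/- If 1 ≤ a ≤ b, then Beta(a,b) satisfies the mode-median-mean inequality: its mode (a-1)/(a+b-2) (interpreted suitably when a = b = 1) is at most some median, which is at most its mean a/(a+b). -/
open MeasureTheory Set

section
open intervalIntegral

namespace MMM

/-- the Beta density (unnormalised) -/
noncomputable def bf (a b : ℝ) : ℝ → ℝ := fun y => y ^ (a-1) * (1-y) ^ (b-1)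

/-- primitive -/
noncomputable def J (a b : ℝ) (x : ℝ) : ℝ := ∫ t in (0:ℝ)..x, bf a b t

variable {a b : ℝ}

lemma bf_cont (ha : 1 ≤ a) (hb : 1 ≤ b) : Continuous (bf a b) :=
  (Real.continuous_rpow_const (by linarith)).mul
    ((Real.continuous_rpow_const (by linarith)).comp (continuous_const.sub continuous_id))

lemma bf_nonneg {y : ℝ} (hy : 0 ≤ y) (hy1 : y ≤ 1) : 0 ≤ bf a b y :=
  mul_nonneg (Real.rpow_nonneg hy _) (Real.rpow_nonneg (by linarith) _)

lemma bf_pos {y : ℝ} (hy : 0 < y) (hy1 : y < 1) : 0 < bf a b y :=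
  mul_pos (Real.rpow_pos_of_pos hy _) (Real.rpow_pos_of_pos (by linarith) _)

lemma bf_intable (ha : 1 ≤ a) (hb : 1 ≤ b) (u v : ℝ) : IntervalIntegrable (bf a b) volume u v :=
  (bf_cont ha hb).intervalIntegrable u v

lemma hasDerivAt_J (ha : 1 ≤ a) (hb : 1 ≤ b) (x : ℝ) : HasDerivAt (J a b) (bf a b x) x :=
  ((bf_cont ha hb).integral_hasStrictDerivAt 0 x).hasDerivAt

lemma J_cont (ha : 1 ≤ a) (hb : 1 ≤ b) : Continuous (J a b) :=
  continuous_iff_continuousAt.mpr fun x => (hasDerivAt_J ha hb x).continuousAt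

lemma J_zero : J a b 0 = 0 := intervalIntegral.integral_same

lemma J_add (ha : 1 ≤ a) (hb : 1 ≤ b) (u v : ℝ) :
    J a b u + ∫ t in u..v, bf a b t = J a b v :=
  integral_add_adjacent_intervals (bf_intable ha hb 0 u) (bf_intable ha hb u v)

lemma J_mono (ha : 1 ≤ a) (hb : 1 ≤ b) {u v : ℝ} (h0 : 0 ≤ u) (huv : u ≤ v) (hv : v ≤ 1) :
    J a b u ≤ J a b v := by
  have := J_add ha hb u v
  have h2 : 0 ≤ ∫ t in u..v, bf a b t :=
    intervalIntegral.integral_nonneg huv (fun x hx => bf_nonneg (le_trans h0 hx.1) (le_trans hx.2 hv))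
  linarith

lemma betaInt_eq (ha : 1 ≤ a) (hb : 1 ≤ b) {x : ℝ} (h0 : 0 ≤ x) (h1 : x ≤ 1) :
    betaInt a b x = J a b x := by
  rw [betaInt, min_eq_left h1, J, intervalIntegral.integral_of_le h0,
    MeasureTheory.integral_Ioc_eq_integral_Ioo]
  rfl

end MMM
namespace MMM

/-- log ratio of density at `q+t` vs `q-t` -/
noncomputable def eta (c d q t : ℝ) : ℝ :=
  c * (Real.log (q+t) - Real.log (q-t)) - d * (Real.log ((1-q)+t) - Real.log ((1-q)-t))

lemma eta_zero {c d q : ℝ} : eta c d q 0 = 0 := by simp [eta]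

lemma hasDerivAt_eta {c d q t : ℝ} (h1 : 0 < q + t) (h2 : 0 < q - t)
    (h3 : 0 < (1-q) + t) (h4 : 0 < (1-q) - t) :
    HasDerivAt (eta c d q)
      (c * (1/(q+t) + 1/(q-t)) - d * (1/((1-q)+t) + 1/((1-q)-t))) t := by
  have e1 : HasDerivAt (fun t : ℝ => Real.log (q + t)) (1/(q+t)) t := by
    simpa using (((hasDerivAt_id t).const_add q).log h1.ne')
  have e2 : HasDerivAt (fun t : ℝ => Real.log (q - t)) (-(1/(q-t))) t := by
    have := (((hasDerivAt_id t).const_sub q).log h2.ne')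
    simpa [neg_div] using this
  have e3 : HasDerivAt (fun t : ℝ => Real.log ((1-q) + t)) (1/((1-q)+t)) t := by
    simpa using (((hasDerivAt_id t).const_add (1-q)).log h3.ne')
  have e4 : HasDerivAt (fun t : ℝ => Real.log ((1-q) - t)) (-(1/((1-q)-t))) t := by
    have := (((hasDerivAt_id t).const_sub (1-q)).log h4.ne')
    simpa [neg_div] using this
  have := (((e1.sub e2).const_mul c).sub ((e3.sub e4).const_mul d))
  refine this.congr_deriv ?_
  ring

/-- the derivative as a rational function -/
lemma eta_deriv_eq {c d q t : ℝ} (h1 : 0 < q + t) (h2 : 0 < q - t)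
    (h3 : 0 < (1-q) + t) (h4 : 0 < (1-q) - t) :
    c * (1/(q+t) + 1/(q-t)) - d * (1/((1-q)+t) + 1/((1-q)-t)) =
      2 * ((d*(1-q) - c*q) * t^2 + q*(1-q)*(c*(1-q) - d*q)) /
        ((q+t)*(q-t)*((1-q)+t)*((1-q)-t)) := by
  field_simp
  ring

lemma eta_contOn {c d q u v : ℝ} (hq : 0 < q) (hq2 : q ≤ 1/2) (hu : 0 ≤ u) (hv : v < q) :
    ContinuousOn (eta c d q) (Icc u v) := by
  intro s hs
  have h1 : 0 < q + s := by have := hs.1; linarith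
  have h2 : 0 < q - s := by have := hs.2; linarith
  have h3 : 0 < (1-q) + s := by have := hs.1; linarith
  have h4 : 0 < (1-q) - s := by have := hs.2; linarith
  exact (hasDerivAt_eta h1 h2 h3 h4).continuousAt.continuousWithinAt

end MMM
namespace MMM

lemma eta_deriv_formula {c d q : ℝ} (hq : 0 < q) (hq2 : q ≤ 1/2) {s : ℝ}
    (hs0 : 0 < s) (hsq : s < q) :
    deriv (eta c d q) s =
      2 * ((d*(1-q) - c*q) * s^2 + q*(1-q)*(c*(1-q) - d*q)) /
        ((q+s)*(q-s)*((1-q)+s)*((1-q)-s)) := by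
  have h1 : 0 < q + s := by linarith
  have h2 : 0 < q - s := by linarith
  have h3 : 0 < (1-q) + s := by linarith
  have h4 : 0 < (1-q) - s := by linarith
  rw [(hasDerivAt_eta h1 h2 h3 h4).deriv]
  exact eta_deriv_eq h1 h2 h3 h4

lemma eta_diffOn {c d q : ℝ} (hq : 0 < q) {u v : ℝ} (hu : 0 ≤ u) (hv : v < q) (hq2 : q ≤ 1/2) :
    DifferentiableOn ℝ (eta c d q) (Ioo u v) := by
  intro s hs
  have h1 : 0 < q + s := by have := hs.1; linarith
  have h2 : 0 < q - s := by have := hs.2; linarith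
  have h3 : 0 < (1-q) + s := by have := hs.1; linarith
  have h4 : 0 < (1-q) - s := by have := hs.2; linarith
  exact (hasDerivAt_eta h1 h2 h3 h4).differentiableAt.differentiableWithinAt

/-- If the constant coefficient is nonnegative, `eta` is nonnegative on `(0,q)`. -/
lemma eta_nonneg_of_A0 {c d q : ℝ} (hc : 0 ≤ c) (hcd : c ≤ d) (hq : 0 < q) (hq2 : q ≤ 1/2)
    (hA0 : 0 ≤ c*(1-q) - d*q) {t : ℝ} (ht0 : 0 < t) (htq : t < q) : 0 ≤ eta c d q t := by
  have hA1 : 0 ≤ d*(1-q) - c*q := by nlinarith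
  have hmono : MonotoneOn (eta c d q) (Icc 0 t) := by
    apply monotoneOn_of_deriv_nonneg (convex_Icc 0 t)
      (eta_contOn hq hq2 le_rfl htq)
    · rw [interior_Icc]; exact eta_diffOn hq le_rfl htq hq2
    · intro s hs
      rw [interior_Icc] at hs
      rw [eta_deriv_formula hq hq2 hs.1 (lt_trans hs.2 htq)]
      have h1 : 0 < q + s := by have := hs.1; linarith
      have h2 : 0 < q - s := by have hst := hs.2; linarith
      have h3 : 0 < (1-q) + s := by have := hs.1; linarith
      have h4 : 0 < (1-q) - s := by have hst := hs.2; linarith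
      have hnum : 0 ≤ (d*(1-q) - c*q) * s^2 + q*(1-q)*(c*(1-q) - d*q) := by
        have hx1 : 0 ≤ (d*(1-q) - c*q) * s^2 := mul_nonneg hA1 (sq_nonneg s)
        have hx2 : 0 ≤ q*(1-q)*(c*(1-q) - d*q) :=
          mul_nonneg (mul_nonneg hq.le (by linarith)) hA0
        linarith
      positivity
  have := hmono (left_mem_Icc.mpr ht0.le) (right_mem_Icc.mpr ht0.le) ht0.le
  simpa [eta_zero] using this

/-- once `eta` is nonnegative it stays nonnegative -/
lemma eta_upward {c d q : ℝ} (hc : 0 ≤ c) (hcd : c ≤ d) (hq : 0 < q) (hq2 : q ≤ 1/2)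
    {s t : ℝ} (hs : 0 < s) (hst : s ≤ t) (ht : t < q) (hes : 0 ≤ eta c d q s) :
    0 ≤ eta c d q t := by
  rcases le_or_gt 0 (c*(1-q) - d*q) with hA0 | hA0
  · exact eta_nonneg_of_A0 hc hcd hq hq2 hA0 (lt_of_lt_of_le hs hst) ht
  have hA1 : 0 < d*(1-q) - c*q := by nlinarith
  -- key: the numerator at `s` must be positive, else `eta s < 0`
  have hNs : 0 < (d*(1-q) - c*q) * s^2 + q*(1-q)*(c*(1-q) - d*q) := by
    by_contra hNs
    push_neg at hNs
    have hanti : StrictAntiOn (eta c d q) (Icc 0 s) := by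
      apply strictAntiOn_of_deriv_neg (convex_Icc 0 s)
        (eta_contOn hq hq2 le_rfl (lt_of_le_of_lt hst ht))
      intro v hv
      rw [interior_Icc] at hv
      have hvq : v < q := lt_of_lt_of_le hv.2 (le_of_lt (lt_of_le_of_lt hst ht))
      rw [eta_deriv_formula hq hq2 hv.1 hvq]
      have h1 : 0 < q + v := by have := hv.1; linarith
      have h2 : 0 < q - v := by linarith
      have h3 : 0 < (1-q) + v := by have := hv.1; linarith
      have h4 : 0 < (1-q) - v := by linarith
      have hnum : (d*(1-q) - c*q) * v^2 + q*(1-q)*(c*(1-q) - d*q) < 0 := by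
        have hv2 : v^2 < s^2 := by nlinarith [hv.1, hv.2]
        nlinarith
      have hden : 0 < (q+v)*(q-v)*((1-q)+v)*((1-q)-v) := by positivity
      have : 2 * ((d*(1-q) - c*q) * v^2 + q*(1-q)*(c*(1-q) - d*q)) < 0 := by linarith
      exact div_neg_of_neg_of_pos this hden
    have := hanti (left_mem_Icc.mpr hs.le) (right_mem_Icc.mpr hs.le) hs
    rw [eta_zero] at this
    linarith
  -- now `eta` is monotone on `[s, t]`
  have hmono : MonotoneOn (eta c d q) (Icc s t) := by
    apply monotoneOn_of_deriv_nonneg (convex_Icc s t) (eta_contOn hq hq2 hs.le ht)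
    · rw [interior_Icc]; exact eta_diffOn hq hs.le ht hq2
    · intro v hv
      rw [interior_Icc] at hv
      have hv0 : 0 < v := lt_trans hs hv.1
      have hvq : v < q := lt_trans hv.2 ht
      rw [eta_deriv_formula hq hq2 hv0 hvq]
      have h1 : 0 < q + v := by linarith
      have h2 : 0 < q - v := by linarith
      have h3 : 0 < (1-q) + v := by linarith
      have h4 : 0 < (1-q) - v := by linarith
      have hnum : 0 ≤ (d*(1-q) - c*q) * v^2 + q*(1-q)*(c*(1-q) - d*q) := by
        have hv2 : s^2 ≤ v^2 := by nlinarith [hv.1]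
        nlinarith
      positivity
  have := hmono (left_mem_Icc.mpr hst) (right_mem_Icc.mpr hst) hst
  linarith

/-- single crossing point for `eta` -/
lemma eta_crossing {c d q : ℝ} (hc : 0 ≤ c) (hcd : c ≤ d) (hq : 0 < q) (hq2 : q ≤ 1/2) :
    ∃ t₀ ∈ Icc 0 q, (∀ t, 0 < t → t < t₀ → eta c d q t ≤ 0) ∧
      (∀ t, t₀ < t → t < q → 0 ≤ eta c d q t) := by
  classical
  set S : Set ℝ := {t | (t ∈ Ioo 0 q ∧ 0 ≤ eta c d q t) ∨ t = q} with hS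
  have hqS : q ∈ S := Or.inr rfl
  have hne : S.Nonempty := ⟨q, hqS⟩
  have hbdd : BddBelow S := ⟨0, by
    rintro x (⟨hx, _⟩ | rfl)
    · exact hx.1.le
    · exact hq.le⟩
  refine ⟨sInf S, ⟨le_csInf hne (by
    rintro x (⟨hx, _⟩ | rfl)
    · exact hx.1.le
    · exact hq.le), csInf_le hbdd hqS⟩, ?_, ?_⟩
  · intro t ht0 htI
    by_contra hpos
    push_neg at hpos
    have htq : t < q := lt_of_lt_of_le htI (csInf_le hbdd hqS)
    have : t ∈ S := Or.inl ⟨⟨ht0, htq⟩, hpos.le⟩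
    exact absurd (csInf_le hbdd this) (not_le.mpr htI)
  · intro t htI htq
    obtain ⟨s, hsS, hst⟩ := exists_lt_of_csInf_lt hne htI
    rcases hsS with ⟨hs, hes⟩ | rfl
    · exact eta_upward hc hcd hq hq2 hs.1 hst.le htq hes
    · exact absurd htq (not_lt.mpr hst.le)

end MMM
namespace MMM

lemma bf_eq_exp (ha : 1 ≤ a) (hb : 1 ≤ b) {y : ℝ} (h0 : 0 < y) (h1 : y < 1) :
    bf a b y = Real.exp ((a-1) * Real.log y + (b-1) * Real.log (1-y)) := by
  rw [bf, Real.rpow_def_of_pos h0, Real.rpow_def_of_pos (by linarith : (0:ℝ) < 1 - y),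
    ← Real.exp_add]
  ring_nf

/-- `eta ≥ 0` means the density at `q+t` dominates the one at `q-t`. -/
lemma bf_reflect_ge (ha : 1 ≤ a) (hb : 1 ≤ b) {q t : ℝ} (hq : 0 < q) (hq2 : q ≤ 1/2)
    (ht : 0 < t) (htq : t < q) (he : 0 ≤ eta (a-1) (b-1) q t) :
    bf a b (q - t) ≤ bf a b (q + t) := by
  have h1 : 0 < q + t := by linarith
  have h2 : 0 < q - t := by linarith
  have h3 : q + t < 1 := by linarith
  have h4 : q - t < 1 := by linarith
  rw [bf_eq_exp ha hb h2 h4, bf_eq_exp ha hb h1 h3]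
  apply Real.exp_le_exp.mpr
  have e1 : 1 - (q - t) = (1-q) + t := by ring
  have e2 : 1 - (q + t) = (1-q) - t := by ring
  rw [e1, e2]
  unfold eta at he
  nlinarith [he]

lemma bf_reflect_le (ha : 1 ≤ a) (hb : 1 ≤ b) {q t : ℝ} (hq : 0 < q) (hq2 : q ≤ 1/2)
    (ht : 0 < t) (htq : t < q) (he : eta (a-1) (b-1) q t ≤ 0) :
    bf a b (q + t) ≤ bf a b (q - t) := by
  have h1 : 0 < q + t := by linarith
  have h2 : 0 < q - t := by linarith
  have h3 : q + t < 1 := by linarith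
  have h4 : q - t < 1 := by linarith
  rw [bf_eq_exp ha hb h2 h4, bf_eq_exp ha hb h1 h3]
  apply Real.exp_le_exp.mpr
  have e1 : 1 - (q - t) = (1-q) + t := by ring
  have e2 : 1 - (q + t) = (1-q) - t := by ring
  rw [e1, e2]
  unfold eta at he
  nlinarith [he]

/-- the density at `s` dominates the one at `1-s` for `s ≤ 1/2` -/
lemma bf_half (ha : 1 ≤ a) (hab : a ≤ b) {s : ℝ} (h0 : 0 < s) (h2 : s ≤ 1/2) :
    bf a b (1 - s) ≤ bf a b s := by
  have hb : 1 ≤ b := le_trans ha hab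
  have hs1 : s < 1 := by linarith
  have h1s : 0 < 1 - s := by linarith
  have h1s1 : 1 - s < 1 := by linarith
  rw [bf_eq_exp ha hb h1s h1s1, bf_eq_exp ha hb h0 hs1]
  apply Real.exp_le_exp.mpr
  have e1 : 1 - (1 - s) = s := by ring
  rw [e1]
  have hlog : Real.log s ≤ Real.log (1 - s) := Real.log_le_log h0 (by linarith)
  nlinarith [mul_nonneg (sub_nonneg.mpr hab) (sub_nonneg.mpr hlog)]

end MMM
namespace MMM

lemma ae_ne_pt (r : ℝ) : ∀ᵐ x : ℝ ∂volume, x ≠ r := by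
  have : volume ({r} : Set ℝ) = 0 := Real.volume_singleton
  rw [MeasureTheory.ae_iff]
  simpa [Set.setOf_eq_eq_singleton'] using this

/-- a.e.-monotone comparison of interval integrals, given the bound away from two points -/
lemma integral_mono_ae2 {f g : ℝ → ℝ} {u v : ℝ} (huv : u ≤ v)
    (hf : IntervalIntegrable f volume u v) (hg : IntervalIntegrable g volume u v)
    (h : ∀ x, x ∈ Icc u v → x ≠ u → x ≠ v → f x ≤ g x) :
    (∫ x in u..v, f x) ≤ ∫ x in u..v, g x := by
  apply intervalIntegral.integral_mono_ae_restrict huv hf hg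
  have h1 : ∀ᵐ x : ℝ ∂(volume.restrict (Icc u v)), x ≠ u := ae_restrict_of_ae (ae_ne_pt u)
  have h2 : ∀ᵐ x : ℝ ∂(volume.restrict (Icc u v)), x ≠ v := ae_restrict_of_ae (ae_ne_pt v)
  have h3 : ∀ᵐ x : ℝ ∂(volume.restrict (Icc u v)), x ∈ Icc u v :=
    ae_restrict_mem measurableSet_Icc
  filter_upwards [h1, h2, h3] with x hx1 hx2 hx3
  exact h x hx3 hx1 hx2

variable {a b : ℝ}

lemma B_pos (ha : 1 ≤ a) (hab : a ≤ b) : 0 < J a b 1 := by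
  have hb : 1 ≤ b := le_trans ha hab
  exact intervalIntegral_pos_of_pos_on (bf_intable ha hb 0 1)
    (fun x hx => bf_pos hx.1 hx.2) one_pos

lemma half_ge (ha : 1 ≤ a) (hab : a ≤ b) : J a b 1 ≤ 2 * J a b (1/2) := by
  have hb : 1 ≤ b := le_trans ha hab
  have hsplit := J_add ha hb (1/2) 1
  have hrefl : (∫ x in (0:ℝ)..(1/2), bf a b (1 - x)) = ∫ x in (1/2:ℝ)..1, bf a b x := by
    rw [intervalIntegral.integral_comp_sub_left (bf a b) 1]
    norm_num
  have hmono : (∫ x in (0:ℝ)..(1/2), bf a b (1 - x)) ≤ ∫ x in (0:ℝ)..(1/2), bf a b x := by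
    apply integral_mono_ae2 (by norm_num)
      (((bf_cont ha hb).comp (continuous_const.sub continuous_id)).intervalIntegrable _ _)
      (bf_intable ha hb _ _)
    intro x hx hx0 _
    have hx0' : 0 < x := lt_of_le_of_ne hx.1 (Ne.symm hx0)
    exact bf_half ha hab hx0' hx.2
  have : (∫ x in (1/2:ℝ)..1, bf a b x) ≤ J a b (1/2) := by
    rw [← hrefl]; exact hmono
  linarith

/-- existence of the median -/
lemma median_exists (ha : 1 ≤ a) (hab : a ≤ b) :
    ∃ m : ℝ, 0 < m ∧ m ≤ 1/2 ∧ 2 * J a b m = J a b 1 := by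
  have hb : 1 ≤ b := le_trans ha hab
  have hB := B_pos ha hab
  have hIVT := intermediate_value_Icc (by norm_num : (0:ℝ) ≤ 1/2)
    ((J_cont ha hb).continuousOn (s := Icc 0 (1/2)))
  have hmem : J a b 1 / 2 ∈ Icc (J a b 0) (J a b (1/2)) := by
    constructor
    · rw [J_zero]; linarith
    · have := half_ge ha hab; linarith
  obtain ⟨m, hm, hJm⟩ := hIVT hmem
  refine ⟨m, ?_, hm.2, by rw [hJm]; ring⟩
  rcases lt_or_eq_of_le hm.1 with h | h
  · exact h
  · exfalso; rw [← h, J_zero] at hJm; linarith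

end MMM
namespace MMM
variable {a b : ℝ}

lemma mode_le_median (ha : 1 ≤ a) (hab : a ≤ b) {m : ℝ} (hm0 : 0 < m) (hm2 : m ≤ 1/2)
    (hmed : 2 * J a b m = J a b 1) : (a-1)/(a+b-2) ≤ m := by
  have hb : 1 ≤ b := le_trans ha hab
  rcases eq_or_lt_of_le ha with h1 | h1
  · rw [← h1]; simp; positivity
  set Mo := (a-1)/(a+b-2) with hMo
  have hden : 0 < a + b - 2 := by linarith
  have hMo0 : 0 < Mo := div_pos (by linarith) hden
  have hMo2 : Mo ≤ 1/2 := by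
    rw [hMo, div_le_iff₀ hden]; linarith
  -- key : 2 * J a b Mo ≤ J a b 1
  have hkey : 2 * J a b Mo ≤ J a b 1 := by
    have e1 : (∫ s in (0:ℝ)..Mo, bf a b (Mo - s)) = J a b Mo := by
      rw [intervalIntegral.integral_comp_sub_left]
      simp [J]
    have e2 : (∫ s in (0:ℝ)..Mo, bf a b (Mo + s)) = J a b (2*Mo) - J a b Mo := by
      rw [intervalIntegral.integral_comp_add_left]
      have := J_add ha hb Mo (2*Mo)
      have e : Mo + Mo = 2 * Mo := by ring
      simp only [add_zero, e]
      linarith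
    have hA0 : (0:ℝ) ≤ (a-1)*(1-Mo) - (b-1)*Mo := by
      have : (a-1)*(1-Mo) - (b-1)*Mo = 0 := by
        rw [hMo]; field_simp; ring
      linarith
    have hmono : (∫ s in (0:ℝ)..Mo, bf a b (Mo - s)) ≤ ∫ s in (0:ℝ)..Mo, bf a b (Mo + s) := by
      apply integral_mono_ae2 hMo0.le
        (((bf_cont ha hb).comp (continuous_const.sub continuous_id)).intervalIntegrable _ _)
        (((bf_cont ha hb).comp (continuous_const.add continuous_id)).intervalIntegrable _ _)
      intro s hs hs0 hsMo
      have hs0' : 0 < s := lt_of_le_of_ne hs.1 (Ne.symm hs0)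
      have hsMo' : s < Mo := lt_of_le_of_ne hs.2 hsMo
      exact bf_reflect_ge ha hb hMo0 hMo2 hs0' hsMo'
        (eta_nonneg_of_A0 (by linarith) (by linarith) hMo0 hMo2 hA0 hs0' hsMo')
    have h2Mo : J a b (2*Mo) ≤ J a b 1 := J_mono ha hb (by linarith) (by linarith) le_rfl
    have := J_add ha hb Mo 1
    -- J Mo = ∫ bf(Mo - s) ≤ ∫ bf(Mo + s) = J (2 Mo) - J Mo ≤ J 1 - J Mo
    linarith [e1 ▸ (e2 ▸ hmono)]
  by_contra hcon
  push_neg at hcon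
  have hpos : 0 < ∫ x in m..Mo, bf a b x :=
    intervalIntegral_pos_of_pos_on (bf_intable ha hb m Mo)
      (fun x hx => bf_pos (lt_trans hm0 hx.1) (by have := hx.2; linarith)) hcon
  have := J_add ha hb m Mo
  linarith

end MMM
namespace MMM
variable {a b : ℝ}

/-- Key inequality: `F(m+t) + F(m-t) ≤ 1` for the median `m` and `t ∈ [0,m]`. -/
lemma KI (ha : 1 ≤ a) (hab : a ≤ b) {m : ℝ} (hm0 : 0 < m) (hm2 : m ≤ 1/2)
    (hmed : 2 * J a b m = J a b 1) :
    ∀ t ∈ Icc (0:ℝ) m, J a b (m+t) + J a b (m-t) ≤ J a b 1 := by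
  have hb : 1 ≤ b := le_trans ha hab
  obtain ⟨t₀, ht₀, hneg, hpos⟩ :=
    eta_crossing (c := a-1) (d := b-1) (by linarith) (by linarith) hm0 hm2
  intro t ht
  rcases le_or_gt t t₀ with hcase | hcase
  · -- t ≤ t₀ : compare with G(0) = 0
    have e1 : (∫ s in (0:ℝ)..t, bf a b (m + s)) = J a b (m+t) - J a b m := by
      rw [intervalIntegral.integral_comp_add_left]
      have := J_add ha hb m (m+t)
      simp only [add_zero]
      linarith
    have e2 : (∫ s in (0:ℝ)..t, bf a b (m - s)) = J a b m - J a b (m-t) := by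
      rw [intervalIntegral.integral_comp_sub_left]
      have := J_add ha hb (m-t) m
      simp only [sub_zero]
      linarith
    have hmono : (∫ s in (0:ℝ)..t, bf a b (m + s)) ≤ ∫ s in (0:ℝ)..t, bf a b (m - s) := by
      apply integral_mono_ae2 ht.1
        (((bf_cont ha hb).comp (continuous_const.add continuous_id)).intervalIntegrable _ _)
        (((bf_cont ha hb).comp (continuous_const.sub continuous_id)).intervalIntegrable _ _)
      intro s hs hs0 hst
      have hs0' : 0 < s := lt_of_le_of_ne hs.1 (Ne.symm hs0)
      have hst' : s < t := lt_of_le_of_ne hs.2 hst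
      have hsm : s < m := lt_of_lt_of_le hst' ht.2
      exact bf_reflect_le ha hb hm0 hm2 hs0' hsm
        (hneg s hs0' (lt_of_lt_of_le hst' hcase))
    linarith [e1 ▸ (e2 ▸ hmono)]
  · -- t₀ < t : compare with G(m) ≥ 0
    have e3 : (∫ s in t..m, bf a b (m + s)) = J a b (m+m) - J a b (m+t) := by
      rw [intervalIntegral.integral_comp_add_left]
      have := J_add ha hb (m+t) (m+m)
      linarith
    have e4 : (∫ s in t..m, bf a b (m - s)) = J a b (m-t) := by
      rw [intervalIntegral.integral_comp_sub_left]
      simp [J]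
    have hmono : (∫ s in t..m, bf a b (m - s)) ≤ ∫ s in t..m, bf a b (m + s) := by
      apply integral_mono_ae2 ht.2
        (((bf_cont ha hb).comp (continuous_const.sub continuous_id)).intervalIntegrable _ _)
        (((bf_cont ha hb).comp (continuous_const.add continuous_id)).intervalIntegrable _ _)
      intro s hs hst hsm
      have hst' : t < s := lt_of_le_of_ne hs.1 (Ne.symm hst)
      have hsm' : s < m := lt_of_le_of_ne hs.2 hsm
      have hs0' : 0 < s := lt_of_le_of_lt ht.1 hst'
      exact bf_reflect_ge ha hb hm0 hm2 hs0' hsm'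
        (hpos s (lt_trans hcase hst') hsm')
    have h2m : J a b (m+m) ≤ J a b 1 := J_mono ha hb (by linarith) (by linarith) le_rfl
    linarith [e3 ▸ (e4 ▸ hmono)]

/-- the first-moment identity -/
lemma mean_identity (ha : 1 ≤ a) (hab : a ≤ b) :
    (a+b) * (∫ y in (0:ℝ)..1, y * bf a b y) = a * J a b 1 := by
  have hb : 1 ≤ b := le_trans ha hab
  set φ : ℝ → ℝ := fun y => y ^ a * (1-y) ^ b with hφ
  set ψ : ℝ → ℝ := fun y => a * bf a b y - (a+b) * (y * bf a b y) with hψ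
  have hψc : Continuous ψ := by
    apply Continuous.sub
    · exact continuous_const.mul (bf_cont ha hb)
    · exact continuous_const.mul (continuous_id.mul (bf_cont ha hb))
  have hφc : Continuous φ :=
    (Real.continuous_rpow_const (by linarith)).mul
      ((Real.continuous_rpow_const (by linarith)).comp (continuous_const.sub continuous_id))
  have hd : ∀ y ∈ Ioo (0:ℝ) 1, HasDerivAt φ (ψ y) y := by
    intro y hy
    have hy0 : (0:ℝ) < y := hy.1
    have hy1 : y < 1 := hy.2
    have h1y : (0:ℝ) < 1 - y := by linarith
    have h1 : HasDerivAt (fun y : ℝ => y ^ a) (a * y ^ (a-1)) y :=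
      Real.hasDerivAt_rpow_const (Or.inl hy0.ne')
    have h2outer : HasDerivAt (fun x : ℝ => x ^ b) (b * (1-y) ^ (b-1)) (1-y) :=
      Real.hasDerivAt_rpow_const (Or.inl h1y.ne')
    have h2inner : HasDerivAt (fun y : ℝ => 1 - y) (-1) y := (hasDerivAt_id y).const_sub 1
    have h2 : HasDerivAt (fun y : ℝ => (1-y) ^ b) (b * (1-y) ^ (b-1) * (-1)) y :=
      h2outer.comp y h2inner
    have := h1.mul h2
    refine this.congr_deriv ?_
    have ea : y ^ a = y ^ (a-1) * y := by
      nth_rewrite 1 [show a = (a-1)+1 by ring]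
      exact Real.rpow_add_one hy0.ne' (a-1)
    have eb : (1-y) ^ b = (1-y) ^ (b-1) * (1-y) := by
      nth_rewrite 1 [show b = (b-1)+1 by ring]
      exact Real.rpow_add_one h1y.ne' (b-1)
    rw [hψ]
    simp only [bf]
    rw [ea, eb]
    ring
  have hFTC := intervalIntegral.integral_eq_sub_of_hasDeriv_right_of_le (by norm_num : (0:ℝ) ≤ 1)
    hφc.continuousOn (fun y hy => (hd y hy).hasDerivWithinAt) (hψc.intervalIntegrable 0 1)
  have hφ1 : φ 1 = 0 := by
    simp [hφ, Real.zero_rpow (by linarith : b ≠ 0)]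
  have hφ0 : φ 0 = 0 := by
    simp [hφ, Real.zero_rpow (by linarith : a ≠ 0)]
  rw [hφ1, hφ0, sub_zero] at hFTC
  have i1 : IntervalIntegrable (fun y => a * bf a b y) volume 0 1 :=
    (continuous_const.mul (bf_cont ha hb)).intervalIntegrable _ _
  have i2 : IntervalIntegrable (fun y : ℝ => (a+b) * (y * bf a b y)) volume 0 1 :=
    (continuous_const.mul (continuous_id.mul (bf_cont ha hb))).intervalIntegrable _ _
  have hsplit : (∫ y in (0:ℝ)..1, ψ y) =
      a * J a b 1 - (a+b) * ∫ y in (0:ℝ)..1, y * bf a b y := by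
    rw [hψ]
    rw [intervalIntegral.integral_sub i1 i2, intervalIntegral.integral_const_mul,
      intervalIntegral.integral_const_mul]
    rfl
  rw [hsplit] at hFTC
  linarith

end MMM
namespace MMM
variable {a b : ℝ}

lemma median_le_mean (ha : 1 ≤ a) (hab : a ≤ b) {m : ℝ} (hm0 : 0 < m) (hm2 : m ≤ 1/2)
    (hmed : 2 * J a b m = J a b 1) : m ≤ a / (a+b) := by
  have hb : 1 ≤ b := le_trans ha hab
  set B := J a b 1 with hB
  have hBpos : 0 < B := B_pos ha hab
  have hJc : Continuous (J a b) := J_cont ha hb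
  have hbfc : Continuous (bf a b) := bf_cont ha hb
  have hiJB : ∀ u v : ℝ, IntervalIntegrable (fun y => J a b y - B) volume u v :=
    fun u v => (hJc.sub continuous_const).intervalIntegrable _ _
  have hiYB : ∀ u v : ℝ, IntervalIntegrable (fun y => (y-m) * bf a b y) volume u v :=
    fun u v => ((continuous_id.sub continuous_const).mul hbfc).intervalIntegrable _ _
  have hiJ : ∀ u v : ℝ, IntervalIntegrable (J a b) volume u v :=
    fun u v => hJc.intervalIntegrable _ _
  have hiY : ∀ u v : ℝ, IntervalIntegrable (fun y => y * bf a b y) volume u v :=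
    fun u v => (continuous_id.mul hbfc).intervalIntegrable _ _
  have hiMB : ∀ u v : ℝ, IntervalIntegrable (fun y => m * bf a b y) volume u v :=
    fun u v => (continuous_const.mul hbfc).intervalIntegrable _ _
  have hiBJ : ∀ u v : ℝ, IntervalIntegrable (fun y => B - J a b y) volume u v :=
    fun u v => (continuous_const.sub hJc).intervalIntegrable _ _
  have hiJm : ∀ u v : ℝ, IntervalIntegrable (fun t => J a b (m - t)) volume u v :=
    fun u v => (hJc.comp (continuous_const.sub continuous_id)).intervalIntegrable _ _
  have hiBJm : ∀ u v : ℝ, IntervalIntegrable (fun t => B - J a b (m + t)) volume u v :=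
    fun u v => (continuous_const.sub (hJc.comp (continuous_const.add continuous_id))).intervalIntegrable _ _
  -- integration by parts on [m, 1]
  have q1 : (∫ y in m..1, (J a b y - B)) + (∫ y in m..1, (y-m) * bf a b y) = 0 := by
    have hd : ∀ y ∈ uIcc m 1, HasDerivAt (fun y => (y - m) * (J a b y - B))
        ((J a b y - B) + (y-m) * bf a b y) y := by
      intro y _
      have := ((hasDerivAt_id y).sub_const m).mul ((hasDerivAt_J ha hb y).sub_const B)
      refine this.congr_deriv ?_
      simp only [id_eq]
      ring
    have hint : IntervalIntegrable (fun y => (J a b y - B) + (y-m) * bf a b y) volume m 1 :=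
      (hiJB m 1).add (hiYB m 1)
    have := intervalIntegral.integral_eq_sub_of_hasDerivAt hd hint
    rw [intervalIntegral.integral_add (hiJB m 1) (hiYB m 1)] at this
    simpa [hB] using this
  -- integration by parts on [0, m]
  have q2 : (∫ y in (0:ℝ)..m, J a b y) + (∫ y in (0:ℝ)..m, (y-m) * bf a b y) = 0 := by
    have hd : ∀ y ∈ uIcc (0:ℝ) m, HasDerivAt (fun y => (y - m) * J a b y)
        (J a b y + (y-m) * bf a b y) y := by
      intro y _
      have := ((hasDerivAt_id y).sub_const m).mul (hasDerivAt_J ha hb y)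
      refine this.congr_deriv ?_
      simp only [id_eq]
      ring
    have hint : IntervalIntegrable (fun y => J a b y + (y-m) * bf a b y) volume 0 m :=
      (hiJ 0 m).add (hiYB 0 m)
    have := intervalIntegral.integral_eq_sub_of_hasDerivAt hd hint
    rw [intervalIntegral.integral_add (hiJ 0 m) (hiYB 0 m)] at this
    simpa [J_zero] using this
  -- adjacent-interval splits
  have q3 : (∫ y in (0:ℝ)..m, (y-m) * bf a b y) + (∫ y in m..1, (y-m) * bf a b y)
      = ∫ y in (0:ℝ)..1, (y-m) * bf a b y :=
    intervalIntegral.integral_add_adjacent_intervals (hiYB 0 m) (hiYB m 1)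
  have q4 : (∫ y in (0:ℝ)..1, (y-m) * bf a b y)
      = (∫ y in (0:ℝ)..1, y * bf a b y) - m * B := by
    have : (∫ y in (0:ℝ)..1, (y-m) * bf a b y)
        = (∫ y in (0:ℝ)..1, y * bf a b y) - ∫ y in (0:ℝ)..1, m * bf a b y := by
      rw [← intervalIntegral.integral_sub (hiY 0 1) (hiMB 0 1)]
      congr 1
      ext y
      ring
    rw [this, intervalIntegral.integral_const_mul]
    rfl
  -- the comparison : ∫_0^m J ≤ ∫_m^1 (B - J)
  have s3 : (∫ t in (0:ℝ)..m, (B - J a b (m+t))) = ∫ y in m..(m+m), (B - J a b y) := by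
    rw [intervalIntegral.integral_comp_add_left (fun y => B - J a b y)]
    simp
  have s4 : (∫ t in (0:ℝ)..m, J a b (m-t)) = ∫ y in (0:ℝ)..m, J a b y := by
    rw [intervalIntegral.integral_comp_sub_left (J a b)]
    simp
  have s5 : (∫ t in (0:ℝ)..m, J a b (m-t)) ≤ ∫ t in (0:ℝ)..m, (B - J a b (m+t)) := by
    apply intervalIntegral.integral_mono_on hm0.le (hiJm 0 m) (hiBJm 0 m)
    intro t htI
    have := KI ha hab hm0 hm2 hmed t htI
    linarith
  have s2 : 0 ≤ ∫ y in (m+m)..1, (B - J a b y) := by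
    apply intervalIntegral.integral_nonneg (by linarith)
    intro y hy
    have : J a b y ≤ B := J_mono ha hb (by have := hy.1; linarith) hy.2 le_rfl
    linarith
  have s1 : (∫ y in m..(m+m), (B - J a b y)) + (∫ y in (m+m)..1, (B - J a b y))
      = ∫ y in m..1, (B - J a b y) :=
    intervalIntegral.integral_add_adjacent_intervals (hiBJ m (m+m)) (hiBJ (m+m) 1)
  have scomp : (∫ y in (0:ℝ)..m, J a b y) ≤ ∫ y in m..1, (B - J a b y) := by
    rw [← s4]
    calc (∫ t in (0:ℝ)..m, J a b (m-t)) ≤ ∫ t in (0:ℝ)..m, (B - J a b (m+t)) := s5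
      _ = ∫ y in m..(m+m), (B - J a b y) := s3
      _ ≤ ∫ y in m..1, (B - J a b y) := by rw [← s1]; linarith
  -- rewrite ∫_m^1 (B - J) in terms of ∫_m^1 (J - B)
  have q5 : (∫ y in m..1, (B - J a b y)) = - ∫ y in m..1, (J a b y - B) := by
    rw [← intervalIntegral.integral_neg]
    congr 1
    ext y
    ring
  -- conclude  m * B ≤ ∫_0^1 y * bf
  have hmean := mean_identity ha hab
  rw [← hB] at hmean
  have hfinal : m * B ≤ ∫ y in (0:ℝ)..1, y * bf a b y := by
    have h1 : (∫ y in (0:ℝ)..1, (y-m) * bf a b y) ≥ 0 := by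
      rw [← q3]
      have e1 : (∫ y in (0:ℝ)..m, (y-m) * bf a b y) = - ∫ y in (0:ℝ)..m, J a b y := by
        linarith
      have e2 : (∫ y in m..1, (y-m) * bf a b y) = ∫ y in m..1, (B - J a b y) := by
        rw [q5]; linarith
      rw [e1, e2]
      linarith
    linarith [q4]
  have hab2 : 0 < a + b := by linarith
  rw [le_div_iff₀ hab2]
  nlinarith [hfinal, hBpos]

end MMM

end

/-- Mode–median–mean inequality for `Beta(a,b)` with `1 ≤ a ≤ b`: there is a median `m`
(`P(X ≤ m) ≥ 1/2` and `P(X ≥ m) ≥ 1/2`, the latter being `1 - F(m)` by continuity)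
with `(a-1)/(a+b-2) ≤ m ≤ a/(a+b)`. -/
theorem beta_mode_median_mean (a b : ℝ) (ha : 1 ≤ a) (hab : a ≤ b) :
    ∃ m : ℝ, (a - 1) / (a + b - 2) ≤ m ∧ m ≤ a / (a + b) ∧
      1 / 2 ≤ betaCDF a b m ∧ 1 / 2 ≤ 1 - betaCDF a b m := by
  obtain ⟨m, hm0, hm2, hmed⟩ := MMM.median_exists ha hab
  have hb : 1 ≤ b := le_trans ha hab
  have hB := MMM.B_pos ha hab
  have hcdf : betaCDF a b m = 1/2 := by
    rw [betaCDF, MMM.betaInt_eq ha hb hm0.le (by linarith),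
      MMM.betaInt_eq ha hb (by norm_num) le_rfl]
    rw [div_eq_iff (ne_of_gt hB)]
    linarith
  refine ⟨m, MMM.mode_le_median ha hab hm0 hm2 hmed,
    MMM.median_le_mean ha hab hm0 hm2 hmed, ?_, ?_⟩
  · rw [hcdf]
  · rw [hcdf]; norm_num
end

section
/- Let X ~ P and Y ~ Q be random variables with distributions supported on [0,1] having strictly increasing continuous CDFs F and G. If X ≤_* Y in the star-shaped transform order (i.e., x ↦ G^{-1}(F(x)) is star-shaped), then Y ≤_st X (i.e., G(x) ≥ F(x) for all x). -/
open MeasureTheory ProbabilityTheory Set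

/-- Proposition 15: for distributions on `[0,1]`, the star-shaped transform order
`X ≤_* Y` implies stochastic dominance `Y ≤_st X`. -/
theorem star_order_implies_stochastic_dominance
    (P Q : Measure ℝ) [IsProbabilityMeasure P] [IsProbabilityMeasure Q]
    (hPI : P (Set.Icc (0 : ℝ) 1) = 1) (hQI : Q (Set.Icc (0 : ℝ) 1) = 1)
    (hFc : Continuous (fun x => cdf P x)) (hGc : Continuous (fun x => cdf Q x))
    (hF : StrictMonoOn (fun x => cdf P x) (Set.Icc (0 : ℝ) 1))
    (hG : StrictMonoOn (fun x => cdf Q x) (Set.Icc (0 : ℝ) 1))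
    -- star-shaped transform order `X ≤_* Y`:
    (hstar : ∀ α ∈ Set.Icc (0 : ℝ) 1, ∀ x ∈ Set.Icc (0 : ℝ) 1,
      Function.invFun (fun y => cdf Q y) (cdf P (α * x)) ≤
        α * Function.invFun (fun y => cdf Q y) (cdf P x)) :
    ∀ x : ℝ, cdf P x ≤ cdf Q x := by
  -- F(1) = 1 and G(1) = 1
  have hP1 : cdf P 1 = 1 := by
    rw [cdf_eq_real, measureReal_def]
    have h1 : P (Iic 1) = 1 :=
      le_antisymm prob_le_one (hPI ▸ measure_mono Icc_subset_Iic_self)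
    simp [h1]
  have hQ1 : cdf Q 1 = 1 := by
    rw [cdf_eq_real, measureReal_def]
    have h1 : Q (Iic 1) = 1 :=
      le_antisymm prob_le_one (hQI ▸ measure_mono Icc_subset_Iic_self)
    simp [h1]
  -- cdf vanishes below 0
  have hPneg : ∀ y : ℝ, y < 0 → cdf P y = 0 := by
    intro y hy
    rw [cdf_eq_real, measureReal_def]
    have hc : P (Icc (0:ℝ) 1)ᶜ = 0 := by
      rw [measure_compl measurableSet_Icc (measure_ne_top _ _), hPI, measure_univ]
      simp
    have h0 : P (Iic y) = 0 := by
      refine le_antisymm (le_trans (measure_mono ?_) hc.le) zero_le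
      intro z hz
      simp only [mem_Iic] at hz
      simp only [mem_compl_iff, mem_Icc, not_and_or, not_le]
      exact Or.inl (lt_of_le_of_lt hz hy)
    simp [h0]
  have hQneg : ∀ y : ℝ, y < 0 → cdf Q y = 0 := by
    intro y hy
    rw [cdf_eq_real, measureReal_def]
    have hc : Q (Icc (0:ℝ) 1)ᶜ = 0 := by
      rw [measure_compl measurableSet_Icc (measure_ne_top _ _), hQI, measure_univ]
      simp
    have h0 : Q (Iic y) = 0 := by
      refine le_antisymm (le_trans (measure_mono ?_) hc.le) zero_le
      intro z hz
      simp only [mem_Iic] at hz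
      simp only [mem_compl_iff, mem_Icc, not_and_or, not_le]
      exact Or.inl (lt_of_le_of_lt hz hy)
    simp [h0]
  set G : ℝ → ℝ := fun y => cdf Q y with hGdef
  -- every c ∈ [0,1] is attained by G
  have hsurj : ∀ c ∈ Icc (0:ℝ) 1, ∃ y, G y = c := by
    intro c hc
    have hiv := intermediate_value_Icc (by norm_num : (-1:ℝ) ≤ 1)
      (hGc.continuousOn : ContinuousOn G (Icc (-1) 1))
    have hGm1 : G (-1) = 0 := hQneg (-1) (by norm_num)
    have hG1' : G 1 = 1 := hQ1
    rw [hGm1, hG1'] at hiv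
    obtain ⟨y, _, hy⟩ := hiv hc
    exact ⟨y, hy⟩
  have hGmono : Monotone G := monotone_cdf Q
  -- the key pointwise inequality on [0,1)
  intro t
  rcases lt_or_ge t 0 with ht | ht0
  · rw [hPneg t ht]; exact cdf_nonneg Q t
  rcases le_or_gt 1 t with ht1 | ht1
  · calc cdf P t ≤ 1 := cdf_le_one P t
      _ = G 1 := hQ1.symm
      _ ≤ G t := hGmono ht1
  -- now 0 ≤ t < 1
  have htI : t ∈ Icc (0:ℝ) 1 := ⟨ht0, ht1.le⟩
  have hFt : cdf P t ∈ Icc (0:ℝ) 1 := ⟨cdf_nonneg P t, cdf_le_one P t⟩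
  set y := Function.invFun G (cdf P t) with hy
  have hGy : G y = cdf P t := Function.invFun_eq (hsurj _ hFt)
  have hyt : y ≤ t := by
    rcases eq_or_lt_of_le ht0 with ht0' | ht0'
    · -- t = 0 : use α = 0, x = 1
      have := hstar 0 ⟨le_refl 0, zero_le_one⟩ 1 ⟨zero_le_one, le_refl 1⟩
      simp only [zero_mul] at this
      show Function.invFun G (cdf P t) ≤ t
      rw [← ht0']
      exact this
    · -- 0 < t < 1
      by_contra h
      push_neg at h  -- t < y
      have hy0 : 0 < y := lt_trans ht0' h
      -- pick x with max t (t/y) < x < 1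
      have hty1 : t / y < 1 := (div_lt_one hy0).mpr h
      obtain ⟨x, hx1, hx2⟩ := exists_between (max_lt ht1 hty1)
      have hxt : t < x := lt_of_le_of_lt (le_max_left _ _) hx1
      have hxty : t / y < x := lt_of_le_of_lt (le_max_right _ _) hx1
      have hx0 : 0 < x := lt_trans ht0' hxt
      have hαI : t / x ∈ Icc (0:ℝ) 1 :=
        ⟨div_nonneg ht0 hx0.le, (div_le_one hx0).mpr hxt.le⟩
      have hxI : x ∈ Icc (0:ℝ) 1 := ⟨hx0.le, hx2.le⟩
      have hkey := hstar (t / x) hαI x hxI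
      rw [div_mul_cancel₀ t hx0.ne'] at hkey
      -- the inner value is < 1
      set z := Function.invFun G (cdf P x) with hz
      have hFx : cdf P x ∈ Icc (0:ℝ) 1 := ⟨cdf_nonneg P x, cdf_le_one P x⟩
      have hGz : G z = cdf P x := Function.invFun_eq (hsurj _ hFx)
      have hFx1 : cdf P x < 1 := by
        have := hF hxI (⟨zero_le_one, le_refl 1⟩ : (1:ℝ) ∈ Icc (0:ℝ) 1) hx2
        simpa [hP1] using this
      have hz1 : z ≤ 1 := by
        by_contra hz1
        push_neg at hz1
        have : (1:ℝ) ≤ G z := by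
          calc (1:ℝ) = G 1 := hQ1.symm
            _ ≤ G z := hGmono hz1.le
        rw [hGz] at this
        exact absurd this (not_le.mpr hFx1)
      have h1 : y ≤ t / x := by
        calc y ≤ t / x * z := hkey
          _ ≤ t / x * 1 := by
              exact mul_le_mul_of_nonneg_left hz1 (div_nonneg ht0 hx0.le)
          _ = t / x := mul_one _
      have h2 : t / x < y := by
        rw [div_lt_iff₀ hx0]
        have h3 := mul_lt_mul_of_pos_right hxty hy0
        rw [div_mul_cancel₀ t hy0.ne'] at h3
        nlinarith
      exact absurd (lt_of_le_of_lt h1 h2) (lt_irrefl y)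
  calc cdf P t = G y := hGy.symm
    _ ≤ G t := hGmono hyt
end
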